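/- arXiv:1501.00793 — 9 statements merged into one kernel-verified Lean document; each statement's English description precedes it below -/
import Mathlib

section
/- Let a₂ ∈ (-1,1), let λ₁,λ₂,λ₄ and λ̄₁,λ̄₂,λ̄₄ be positive reals, and set λ₃ = λ₂/(1-a₂²), λ̄₃ = λ̄₂/(1-a₂²). For t ≥ 0 define A(t)=λ₁+4t, B(t)=(λ₂³+3(1-a₂²)λ₂λ₄t)^{1/3}, C(t)=B(t)/(1-a₂²), D(t)=λ₂λ₄(λ₂³+3(1-a₂²)λ₂λ₄t)^{-1/3}, and define Ā,B̄,C̄,D̄ by the same formulas with λ̄ᵢ in place of λᵢ. Then ((A-Ā)/A)² + ((B-B̄)/B)² + ((C-C̄)/C)² + ((D-D̄)/D)² tends to 0 as t → ∞ if and only if λ̄₂λ̄₄ = λ₂λ₄; in particular λ̄₁ and λ̄₂ may be chosen arbitrarily and then λ̄₃, λ̄₄ are determined, so the quasi-convergence class [g]_α is exactly a 2-parameter family. -/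
open Filter

/-- Auxiliary: limit of a ratio of affine functions. -/
lemma aux_ratio_stmt11 (c cb k kb : ℝ) (hk : 0 < k) :
    Filter.Tendsto (fun t : ℝ => (cb + kb * t) / (c + k * t)) Filter.atTop (nhds (kb / k)) := by
  have h1 : Tendsto (fun t : ℝ => cb / t + kb) atTop (nhds (0 + kb)) :=
    (Filter.Tendsto.div_atTop tendsto_const_nhds tendsto_id).add tendsto_const_nhds
  have h2 : Tendsto (fun t : ℝ => c / t + k) atTop (nhds (0 + k)) :=
    (Filter.Tendsto.div_atTop tendsto_const_nhds tendsto_id).add tendsto_const_nhds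
  have h3 := h1.div h2 (by rw [zero_add]; exact hk.ne')
  simp only [zero_add] at h3
  apply h3.congr'
  filter_upwards [eventually_ne_atTop (0 : ℝ)] with t ht
  simp only [Pi.div_apply]
  have e1 : cb / t + kb = (cb + kb * t) / t := by field_simp
  have e2 : c / t + k = (c + k * t) / t := by field_simp
  rw [e1, e2, div_div_div_cancel_right₀ ht]

/-- class A7ii: quasi-convergence of diagonal metrics in the same
frame holds iff `λ̄₂λ̄₄ = λ₂λ₄`; `[g]_α` is a 2-parameter family. -/
theorem stmt_11 (a2 : ℝ) (ha2l : -1 < a2) (ha2r : a2 < 1)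
    (l1 l2 l4 m1 m2 m4 l3 m3 : ℝ)
    (hl1 : 0 < l1) (hl2 : 0 < l2) (hl4 : 0 < l4)
    (hm1 : 0 < m1) (hm2 : 0 < m2) (hm4 : 0 < m4)
    (hl3 : l3 = l2 / (1 - a2 ^ 2)) (hm3 : m3 = m2 / (1 - a2 ^ 2))
    (A B C D Ab Bb Cb Db : ℝ → ℝ)
    (hA : ∀ t : ℝ, A t = l1 + 4 * t)
    (hB : ∀ t : ℝ, B t = (l2 ^ 3 + 3 * (1 - a2 ^ 2) * l2 * l4 * t) ^ ((1:ℝ)/3))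
    (hC : ∀ t : ℝ, C t = B t / (1 - a2 ^ 2))
    (hD : ∀ t : ℝ, D t = l2 * l4 * (l2 ^ 3 + 3 * (1 - a2 ^ 2) * l2 * l4 * t) ^ (-(1:ℝ)/3))
    (hAb : ∀ t : ℝ, Ab t = m1 + 4 * t)
    (hBb : ∀ t : ℝ, Bb t = (m2 ^ 3 + 3 * (1 - a2 ^ 2) * m2 * m4 * t) ^ ((1:ℝ)/3))
    (hCb : ∀ t : ℝ, Cb t = Bb t / (1 - a2 ^ 2))
    (hDb : ∀ t : ℝ, Db t = m2 * m4 * (m2 ^ 3 + 3 * (1 - a2 ^ 2) * m2 * m4 * t) ^ (-(1:ℝ)/3)) :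
    Filter.Tendsto (fun t : ℝ =>
        ((A t - Ab t) / A t) ^ 2 + ((B t - Bb t) / B t) ^ 2 +
        ((C t - Cb t) / C t) ^ 2 + ((D t - Db t) / D t) ^ 2)
      Filter.atTop (nhds 0) ↔ m2 * m4 = l2 * l4 := by
  have ha : (0:ℝ) < 1 - a2 ^ 2 := by nlinarith
  have hk : (0:ℝ) < 3 * (1 - a2 ^ 2) * l2 * l4 :=
    mul_pos (mul_pos (mul_pos (by norm_num) ha) hl2) hl4
  have hkb : (0:ℝ) < 3 * (1 - a2 ^ 2) * m2 * m4 :=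
    mul_pos (mul_pos (mul_pos (by norm_num) ha) hm2) hm4
  have hll : (0:ℝ) < l2 * l4 := mul_pos hl2 hl4
  set r : ℝ := m2 * m4 / (l2 * l4) with hrdef
  have hr : 0 < r := div_pos (mul_pos hm2 hm4) hll
  have hratio : (3 * (1 - a2 ^ 2) * m2 * m4) / (3 * (1 - a2 ^ 2) * l2 * l4) = r := by
    rw [hrdef, div_eq_div_iff hk.ne' hll.ne']; ring
  have hratio' : (3 * (1 - a2 ^ 2) * l2 * l4) / (3 * (1 - a2 ^ 2) * m2 * m4) = r⁻¹ := by
    rw [← hratio, inv_div]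
  -- positivity of the bases for t ≥ 0
  have hxpos : ∀ t : ℝ, 0 ≤ t → 0 < l2 ^ 3 + 3 * (1 - a2 ^ 2) * l2 * l4 * t := fun t ht =>
    add_pos_of_pos_of_nonneg (pow_pos hl2 3) (mul_nonneg hk.le ht)
  have hypos : ∀ t : ℝ, 0 ≤ t → 0 < m2 ^ 3 + 3 * (1 - a2 ^ 2) * m2 * m4 * t := fun t ht =>
    add_pos_of_pos_of_nonneg (pow_pos hm2 3) (mul_nonneg hkb.le ht)
  -- A-term
  have TA : Tendsto (fun t => (A t - Ab t) / A t) atTop (nhds 0) := by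
    have h1 : Tendsto (fun t : ℝ => l1 + 4 * t) atTop atTop :=
      tendsto_atTop_add_const_left _ _ (tendsto_id.const_mul_atTop (by norm_num))
    have h2 := Filter.Tendsto.div_atTop (tendsto_const_nhds (x := l1 - m1)) h1
    exact h2.congr (fun t => by rw [hA, hAb]; congr 1; ring)
  -- B-term
  have TBrat : Tendsto (fun t => Bb t / B t) atTop (nhds (r ^ ((1:ℝ)/3))) := by
    have hin := aux_ratio_stmt11 (l2 ^ 3) (m2 ^ 3) (3 * (1 - a2 ^ 2) * l2 * l4) (3 * (1 - a2 ^ 2) * m2 * m4) hk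
    rw [hratio] at hin
    have h := hin.rpow_const (p := (1:ℝ)/3) (Or.inr (by norm_num))
    apply h.congr'
    filter_upwards [eventually_ge_atTop (0 : ℝ)] with t ht
    rw [hB, hBb, Real.div_rpow (hypos t ht).le (hxpos t ht).le]
  have TB : Tendsto (fun t => (B t - Bb t) / B t) atTop (nhds (1 - r ^ ((1:ℝ)/3))) := by
    have h := (tendsto_const_nhds (x := (1:ℝ))).sub TBrat
    apply h.congr'
    filter_upwards [eventually_ge_atTop (0 : ℝ)] with t ht
    have hBpos : 0 < B t := by rw [hB]; exact Real.rpow_pos_of_pos (hxpos t ht) _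
    rw [sub_div, div_self hBpos.ne']
  -- C-term equals B-term
  have TC : Tendsto (fun t => (C t - Cb t) / C t) atTop (nhds (1 - r ^ ((1:ℝ)/3))) := by
    apply TB.congr'
    filter_upwards [eventually_ge_atTop (0 : ℝ)] with t _
    rw [hC, hCb, ← sub_div, div_div_div_cancel_right₀ ha.ne']
  -- D-term
  have TDrat : Tendsto (fun t => Db t / D t) atTop (nhds (r * r⁻¹ ^ ((1:ℝ)/3))) := by
    have hin := aux_ratio_stmt11 (m2 ^ 3) (l2 ^ 3) (3 * (1 - a2 ^ 2) * m2 * m4) (3 * (1 - a2 ^ 2) * l2 * l4) hkb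
    rw [hratio'] at hin
    have h := (hin.rpow_const (p := (1:ℝ)/3) (Or.inr (by norm_num))).const_mul r
    apply h.congr'
    filter_upwards [eventually_ge_atTop (0 : ℝ)] with t ht
    have hx := hxpos t ht
    have hy := hypos t ht
    have hx3 : (0:ℝ) < (l2 ^ 3 + 3 * (1 - a2 ^ 2) * l2 * l4 * t) ^ ((1:ℝ)/3) :=
      Real.rpow_pos_of_pos hx _
    have hy3 : (0:ℝ) < (m2 ^ 3 + 3 * (1 - a2 ^ 2) * m2 * m4 * t) ^ ((1:ℝ)/3) :=
      Real.rpow_pos_of_pos hy _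
    rw [hD, hDb, Real.div_rpow hx.le hy.le,
      show (-(1:ℝ)/3) = -((1:ℝ)/3) by norm_num,
      Real.rpow_neg hx.le, Real.rpow_neg hy.le, hrdef]
    field_simp
  have TD : Tendsto (fun t => (D t - Db t) / D t) atTop
      (nhds (1 - r * r⁻¹ ^ ((1:ℝ)/3))) := by
    have h := (tendsto_const_nhds (x := (1:ℝ))).sub TDrat
    apply h.congr'
    filter_upwards [eventually_ge_atTop (0 : ℝ)] with t ht
    have hDpos : 0 < D t := by
      rw [hD]; exact mul_pos hll (Real.rpow_pos_of_pos (hxpos t ht) _)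
    rw [sub_div, div_self hDpos.ne']
  -- total limit
  have Tsum : Tendsto (fun t : ℝ =>
      ((A t - Ab t) / A t) ^ 2 + ((B t - Bb t) / B t) ^ 2 +
      ((C t - Cb t) / C t) ^ 2 + ((D t - Db t) / D t) ^ 2) atTop
      (nhds ((0:ℝ) ^ 2 + (1 - r ^ ((1:ℝ)/3)) ^ 2 + (1 - r ^ ((1:ℝ)/3)) ^ 2 +
        (1 - r * r⁻¹ ^ ((1:ℝ)/3)) ^ 2)) :=
    (((TA.pow 2).add (TB.pow 2)).add (TC.pow 2)).add (TD.pow 2)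
  have hu3 : (r ^ ((1:ℝ)/3)) ^ (3:ℕ) = r := by
    rw [← Real.rpow_natCast (r ^ ((1:ℝ)/3)) 3, ← Real.rpow_mul hr.le]
    norm_num
  have hupos : 0 < r ^ ((1:ℝ)/3) := Real.rpow_pos_of_pos hr _
  have huw : r * r⁻¹ ^ ((1:ℝ)/3) = (r ^ ((1:ℝ)/3)) ^ (2:ℕ) := by
    have h1 : (r ^ ((1:ℝ)/3)) ^ (2:ℕ) * r ^ ((1:ℝ)/3) = r := by
      rw [← pow_succ]; exact hu3
    rw [Real.inv_rpow hr.le]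
    field_simp
    linarith [h1]
  rw [huw] at Tsum
  constructor
  · intro h
    have heq := tendsto_nhds_unique h Tsum
    have h0 : (1 - r ^ ((1:ℝ)/3)) ^ 2 = 0 := by
      nlinarith [sq_nonneg (1 - (r ^ ((1:ℝ)/3)) ^ (2:ℕ)), sq_nonneg (1 - r ^ ((1:ℝ)/3))]
    have hu1 : r ^ ((1:ℝ)/3) = 1 := by
      have := (pow_eq_zero_iff (two_ne_zero)).mp h0
      linarith
    have hr1 : r = 1 := by rw [← hu3, hu1]; norm_num
    rw [hrdef] at hr1
    exact (div_eq_one_iff_eq hll.ne').mp hr1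
  · intro h
    have hr1 : r = 1 := by rw [hrdef, h, div_self hll.ne']
    rw [hr1] at Tsum
    simpa [Real.one_rpow] using Tsum
end

section
/- Let a₂, a₂' ∈ (-1,1), set b = a₂ - a₂', and let a,c,d be arbitrary real numbers. Let λ₁,λ₂,λ₄ and λ̄₁,λ̄₂,λ̄₄ be positive reals, and for t ≥ 0 define A(t)=λ₁+4t, B(t)=(λ₂³+3(1-a₂²)λ₂λ₄t)^{1/3}, C(t)=B(t)/(1-a₂²), D(t)=λ₂λ₄(λ₂³+3(1-a₂²)λ₂λ₄t)^{-1/3}, and define Ā(t)=λ̄₁+4t, B̄(t)=(λ̄₂³+3(1-a₂'²)λ̄₂λ̄₄t)^{1/3}, C̄(t)=B̄(t)/(1-a₂'²), D̄(t)=λ̄₂λ̄₄(λ̄₂³+3(1-a₂'²)λ̄₂λ̄₄t)^{-1/3}. Then the quantity ((A-Ā-a²B̄-c²C̄-d²D̄)/A)² + ((B-B̄-b²C̄-a²D̄)/B)² + ((C-C̄)/C)² + ((D-D̄)/D)² + 2(aB̄+bcC̄-adD̄)²/(AB) + 2(cC̄)²/(AC) + 2(dD̄)²/(AD) + 2(bC̄)²/(BC)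 + 2(aD̄)²/(BD) tends to 0 as t → ∞ if and only if a₂' = a₂ and λ̄₂λ̄₄ = λ₂λ₄; in particular the quasi-convergence class [g] is exactly a 2-parameter family. -/
open Filter Real Topology

lemma lin_div_lin (p q u v : ℝ) (hv : 0 < v) :
    Tendsto (fun t : ℝ => (p + q * t) / (u + v * t)) atTop (𝓝 (q / v)) := by
  have h0 : Tendsto (fun t : ℝ => (p * t⁻¹ + q) / (u * t⁻¹ + v)) atTop (𝓝 (q / v)) := by
    have hn : Tendsto (fun t : ℝ => p * t⁻¹ + q) atTop (𝓝 (p * 0 + q)) :=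
      (tendsto_inv_atTop_zero.const_mul p).add tendsto_const_nhds
    have hd : Tendsto (fun t : ℝ => u * t⁻¹ + v) atTop (𝓝 (u * 0 + v)) :=
      (tendsto_inv_atTop_zero.const_mul u).add tendsto_const_nhds
    have := hn.div hd (by simpa using hv.ne')
    simp only [mul_zero, zero_add] at this
    exact this
  refine h0.congr' ?_
  have hden : Tendsto (fun t : ℝ => u + v * t) atTop atTop :=
    tendsto_atTop_add_const_left _ u (tendsto_id.const_mul_atTop hv)
  filter_upwards [eventually_gt_atTop 0, hden.eventually_gt_atTop 0] with t ht hut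
  have ht' : t ≠ 0 := ht.ne'
  field_simp

set_option maxHeartbeats 4000000 in
/-- class A7ii, different frames: quasi-convergence holds iff
`a₂' = a₂` and `λ̄₂λ̄₄ = λ₂λ₄`; `[g]` is a 2-parameter family. -/
theorem stmt_12 (a2 a2' : ℝ) (ha2l : -1 < a2) (ha2r : a2 < 1)
    (ha2l' : -1 < a2') (ha2r' : a2' < 1)
    (b : ℝ) (hb : b = a2 - a2') (a c d : ℝ)
    (l1 l2 l4 m1 m2 m4 : ℝ)
    (hl1 : 0 < l1) (hl2 : 0 < l2) (hl4 : 0 < l4)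
    (hm1 : 0 < m1) (hm2 : 0 < m2) (hm4 : 0 < m4)
    (A B C D Ab Bb Cb Db : ℝ → ℝ)
    (hA : ∀ t : ℝ, A t = l1 + 4 * t)
    (hB : ∀ t : ℝ, B t = (l2 ^ 3 + 3 * (1 - a2 ^ 2) * l2 * l4 * t) ^ ((1:ℝ)/3))
    (hC : ∀ t : ℝ, C t = B t / (1 - a2 ^ 2))
    (hD : ∀ t : ℝ, D t = l2 * l4 * (l2 ^ 3 + 3 * (1 - a2 ^ 2) * l2 * l4 * t) ^ (-(1:ℝ)/3))
    (hAb : ∀ t : ℝ, Ab t = m1 + 4 * t)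
    (hBb : ∀ t : ℝ, Bb t = (m2 ^ 3 + 3 * (1 - a2' ^ 2) * m2 * m4 * t) ^ ((1:ℝ)/3))
    (hCb : ∀ t : ℝ, Cb t = Bb t / (1 - a2' ^ 2))
    (hDb : ∀ t : ℝ, Db t = m2 * m4 * (m2 ^ 3 + 3 * (1 - a2' ^ 2) * m2 * m4 * t) ^ (-(1:ℝ)/3)) :
    Filter.Tendsto (fun t : ℝ =>
        ((A t - Ab t - a ^ 2 * Bb t - c ^ 2 * Cb t - d ^ 2 * Db t) / A t) ^ 2 +
        ((B t - Bb t - b ^ 2 * Cb t - a ^ 2 * Db t) / B t) ^ 2 +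
        ((C t - Cb t) / C t) ^ 2 +
        ((D t - Db t) / D t) ^ 2 +
        2 * (a * Bb t + b * c * Cb t - a * d * Db t) ^ 2 / (A t * B t) +
        2 * (c * Cb t) ^ 2 / (A t * C t) +
        2 * (d * Db t) ^ 2 / (A t * D t) +
        2 * (b * Cb t) ^ 2 / (B t * C t) +
        2 * (a * Db t) ^ 2 / (B t * D t))
      Filter.atTop (nhds 0) ↔ (a2' = a2 ∧ m2 * m4 = l2 * l4) := by
  have h1a2 : (0:ℝ) < 1 - a2 ^ 2 := by nlinarith
  have h1a2' : (0:ℝ) < 1 - a2' ^ 2 := by nlinarith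
  obtain ⟨k, hkdef⟩ : ∃ x : ℝ, x = 3 * (1 - a2 ^ 2) * l2 * l4 := ⟨_, rfl⟩
  obtain ⟨k', hk'def⟩ : ∃ x : ℝ, x = 3 * (1 - a2' ^ 2) * m2 * m4 := ⟨_, rfl⟩
  have hk : 0 < k := by rw [hkdef]; exact mul_pos (mul_pos (mul_pos (by norm_num : (0:ℝ)<3) h1a2) hl2) hl4
  have hk' : 0 < k' := by rw [hk'def]; exact mul_pos (mul_pos (mul_pos (by norm_num : (0:ℝ)<3) h1a2') hm2) hm4
  obtain ⟨P, hP3⟩ : ∃ P : ℝ → ℝ, ∀ t, P t = l2 ^ 3 + k * t := ⟨_, fun t => rfl⟩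
  obtain ⟨P', hP'3⟩ : ∃ Q : ℝ → ℝ, ∀ t, Q t = m2 ^ 3 + k' * t := ⟨_, fun t => rfl⟩
  have hB2 : ∀ t : ℝ, B t = P t ^ ((1:ℝ)/3) := by
    intro t
    have e : l2 ^ 3 + 3 * (1 - a2 ^ 2) * l2 * l4 * t = P t := by rw [hP3, hkdef]
    rw [hB t, e]
  have hBb2 : ∀ t : ℝ, Bb t = P' t ^ ((1:ℝ)/3) := by
    intro t
    have e : m2 ^ 3 + 3 * (1 - a2' ^ 2) * m2 * m4 * t = P' t := by rw [hP'3, hk'def]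
    rw [hBb t, e]
  have hD2 : ∀ t : ℝ, D t = l2 * l4 * P t ^ (-((1:ℝ)/3)) := by
    intro t
    have e : l2 ^ 3 + 3 * (1 - a2 ^ 2) * l2 * l4 * t = P t := by rw [hP3, hkdef]
    rw [hD t, e, show (-(1:ℝ)/3) = -((1:ℝ)/3) by norm_num]
  have hDb2 : ∀ t : ℝ, Db t = m2 * m4 * P' t ^ (-((1:ℝ)/3)) := by
    intro t
    have e : m2 ^ 3 + 3 * (1 - a2' ^ 2) * m2 * m4 * t = P' t := by rw [hP'3, hk'def]
    rw [hDb t, e, show (-(1:ℝ)/3) = -((1:ℝ)/3) by norm_num]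
  -- positivity kit
  have hpos : ∀ t : ℝ, 0 ≤ t → 0 < P t ∧ 0 < P' t ∧ 0 < A t ∧ 0 < B t ∧ 0 < C t ∧ 0 < D t
      ∧ 0 < Bb t ∧ 0 < Cb t ∧ 0 < Db t := by
    intro t ht
    have hPt : 0 < P t := by rw [hP3]; have := mul_nonneg hk.le ht; nlinarith [pow_pos hl2 3]
    have hP't : 0 < P' t := by rw [hP'3]; have := mul_nonneg hk'.le ht; nlinarith [pow_pos hm2 3]
    have hAt : 0 < A t := by rw [hA]; nlinarith
    have hBt : 0 < B t := by rw [hB2]; exact Real.rpow_pos_of_pos hPt _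
    have hCt : 0 < C t := by rw [hC]; exact div_pos hBt h1a2
    have hDt : 0 < D t := by
      rw [hD2]; exact mul_pos (mul_pos hl2 hl4) (Real.rpow_pos_of_pos hPt _)
    have hBbt : 0 < Bb t := by rw [hBb2]; exact Real.rpow_pos_of_pos hP't _
    have hCbt : 0 < Cb t := by rw [hCb]; exact div_pos hBbt h1a2'
    have hDbt : 0 < Db t := by
      rw [hDb2]; exact mul_pos (mul_pos hm2 hm4) (Real.rpow_pos_of_pos hP't _)
    exact ⟨hPt, hP't, hAt, hBt, hCt, hDt, hBbt, hCbt, hDbt⟩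
  -- basic atTop limits
  have hPtop : Tendsto P atTop atTop := by
    have h := tendsto_atTop_add_const_left atTop (l2 ^ 3) (tendsto_id.const_mul_atTop hk)
    exact h.congr fun t => (hP3 t).symm
  have hP'top : Tendsto P' atTop atTop := by
    have h := tendsto_atTop_add_const_left atTop (m2 ^ 3) (tendsto_id.const_mul_atTop hk')
    exact h.congr fun t => (hP'3 t).symm
  have hAtop : Tendsto A atTop atTop := by
    have h := tendsto_atTop_add_const_left atTop l1 (tendsto_id.const_mul_atTop (by norm_num : (0:ℝ) < 4))
    exact h.congr fun t => (hA t).symm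
  have hBtop : Tendsto B atTop atTop := by
    have h := (tendsto_rpow_atTop (show (0:ℝ) < (1:ℝ)/3 by norm_num)).comp hPtop
    exact h.congr fun t => (hB2 t).symm
  have hinvA : Tendsto (fun t : ℝ => (A t)⁻¹) atTop (𝓝 0) := tendsto_inv_atTop_zero.comp hAtop
  have hinvB : Tendsto (fun t : ℝ => (B t)⁻¹) atTop (𝓝 0) := tendsto_inv_atTop_zero.comp hBtop
  -- ratio limits
  obtain ⟨r, hrdef⟩ : ∃ x : ℝ, x = (k'/k) ^ ((1:ℝ)/3) := ⟨_, rfl⟩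
  obtain ⟨q, hqdef⟩ : ∃ x : ℝ, x = (1 - a2 ^ 2) / (1 - a2' ^ 2) := ⟨_, rfl⟩
  obtain ⟨s, hsdef⟩ : ∃ x : ℝ, x = m2 * m4 / (l2 * l4) * (k/k') ^ ((1:ℝ)/3) := ⟨_, rfl⟩
  have hrpos : 0 < r := by rw [hrdef]; exact Real.rpow_pos_of_pos (div_pos hk' hk) _
  have hqpos : 0 < q := by rw [hqdef]; exact div_pos h1a2 h1a2'
  have hspos : 0 < s := by
    rw [hsdef]
    exact mul_pos (div_pos (mul_pos hm2 hm4) (mul_pos hl2 hl4))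
      (Real.rpow_pos_of_pos (div_pos hk hk') _)
  have hP'P : Tendsto (fun t => P' t / P t) atTop (𝓝 (k'/k)) :=
    (lin_div_lin (m2 ^ 3) k' (l2 ^ 3) k hk).congr fun t => by rw [hP3 t, hP'3 t]
  have hPP' : Tendsto (fun t => P t / P' t) atTop (𝓝 (k/k')) :=
    (lin_div_lin (l2 ^ 3) k (m2 ^ 3) k' hk').congr fun t => by rw [hP3 t, hP'3 t]
  have hBbB : Tendsto (fun t => Bb t / B t) atTop (𝓝 r) := by
    rw [hrdef]
    have hc : ContinuousAt (fun x : ℝ => x ^ ((1:ℝ)/3)) (k'/k) :=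
      Real.continuousAt_rpow_const _ _ (Or.inl (div_pos hk' hk).ne')
    refine (hc.tendsto.comp hP'P).congr' ?_
    filter_upwards [eventually_ge_atTop 0] with t ht
    obtain ⟨hPt, hP't, -⟩ := hpos t ht
    simp only [Function.comp]
    rw [Real.div_rpow hP't.le hPt.le, hB2 t, hBb2 t]
  have hDbD : Tendsto (fun t => Db t / D t) atTop (𝓝 s) := by
    rw [hsdef]
    have hc : ContinuousAt (fun x : ℝ => x ^ ((1:ℝ)/3)) (k/k') :=
      Real.continuousAt_rpow_const _ _ (Or.inl (div_pos hk hk').ne')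
    refine ((hc.tendsto.comp hPP').const_mul (m2 * m4 / (l2 * l4))).congr' ?_
    filter_upwards [eventually_ge_atTop 0] with t ht
    obtain ⟨hPt, hP't, -⟩ := hpos t ht
    simp only [Function.comp]
    rw [Real.div_rpow hPt.le hP't.le, hD2 t, hDb2 t,
      Real.rpow_neg hPt.le, Real.rpow_neg hP't.le]
    have h1 : P t ^ ((1:ℝ)/3) ≠ 0 := (Real.rpow_pos_of_pos hPt _).ne'
    have h2 : P' t ^ ((1:ℝ)/3) ≠ 0 := (Real.rpow_pos_of_pos hP't _).ne'
    field_simp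
  have hDb0 : Tendsto Db atTop (𝓝 0) := by
    have h1 : Tendsto (fun t => P' t ^ (-((1:ℝ)/3))) atTop (𝓝 0) :=
      (tendsto_rpow_neg_atTop (show (0:ℝ) < (1:ℝ)/3 by norm_num)).comp hP'top
    have h2 := h1.const_mul (m2 * m4)
    rw [mul_zero] at h2
    exact h2.congr fun t => (hDb2 t).symm
  have hD0 : Tendsto D atTop (𝓝 0) := by
    have h1 : Tendsto (fun t => P t ^ (-((1:ℝ)/3))) atTop (𝓝 0) :=
      (tendsto_rpow_neg_atTop (show (0:ℝ) < (1:ℝ)/3 by norm_num)).comp hPtop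
    have h2 := h1.const_mul (l2 * l4)
    rw [mul_zero] at h2
    exact h2.congr fun t => (hD2 t).symm
  -- B/A → 0 and friends
  have hBA : Tendsto (fun t => B t / A t) atTop (𝓝 0) := by
    have hBP : Tendsto (fun t => B t / P t) atTop (𝓝 0) := by
      have h1 : Tendsto (fun t => P t ^ (-((2:ℝ)/3))) atTop (𝓝 0) :=
        (tendsto_rpow_neg_atTop (show (0:ℝ) < (2:ℝ)/3 by norm_num)).comp hPtop
      refine h1.congr' ?_
      filter_upwards [eventually_ge_atTop 0] with t ht
      obtain ⟨hPt, -⟩ := hpos t ht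
      rw [hB2 t, show (-((2:ℝ)/3)) = (1:ℝ)/3 - 1 by norm_num, Real.rpow_sub hPt,
        Real.rpow_one]
    have hPA : Tendsto (fun t => P t / A t) atTop (𝓝 (k/4)) :=
      (lin_div_lin (l2 ^ 3) k l1 4 (by norm_num)).congr fun t => by rw [hP3 t, hA t]
    have h2 := hBP.mul hPA
    rw [zero_mul] at h2
    refine h2.congr' ?_
    filter_upwards [eventually_ge_atTop 0] with t ht
    obtain ⟨hPt, -⟩ := hpos t ht
    rw [div_mul_div_comm, mul_comm (B t) (P t), mul_div_mul_left _ _ hPt.ne']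
  have hBbA : Tendsto (fun t => Bb t / A t) atTop (𝓝 0) := by
    have hBP : Tendsto (fun t => Bb t / P' t) atTop (𝓝 0) := by
      have h1 : Tendsto (fun t => P' t ^ (-((2:ℝ)/3))) atTop (𝓝 0) :=
        (tendsto_rpow_neg_atTop (show (0:ℝ) < (2:ℝ)/3 by norm_num)).comp hP'top
      refine h1.congr' ?_
      filter_upwards [eventually_ge_atTop 0] with t ht
      obtain ⟨hPt, hP't, -⟩ := hpos t ht
      rw [hBb2 t, show (-((2:ℝ)/3)) = (1:ℝ)/3 - 1 by norm_num, Real.rpow_sub hP't,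
        Real.rpow_one]
    have hPA : Tendsto (fun t => P' t / A t) atTop (𝓝 (k'/4)) :=
      (lin_div_lin (m2 ^ 3) k' l1 4 (by norm_num)).congr fun t => by rw [hP'3 t, hA t]
    have h2 := hBP.mul hPA
    rw [zero_mul] at h2
    refine h2.congr' ?_
    filter_upwards [eventually_ge_atTop 0] with t ht
    obtain ⟨hPt, hP't, -⟩ := hpos t ht
    rw [div_mul_div_comm, mul_comm (Bb t) (P' t), mul_div_mul_left _ _ hP't.ne']
  have hCbB : Tendsto (fun t => Cb t / B t) atTop (𝓝 (r / (1 - a2' ^ 2))) :=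
    (hBbB.div_const _).congr fun t => by rw [hCb t, div_right_comm]
  have hCbA : Tendsto (fun t => Cb t / A t) atTop (𝓝 0) := by
    have h := hBbA.div_const (1 - a2' ^ 2)
    rw [zero_div] at h
    exact h.congr fun t => by rw [hCb t, div_right_comm]
  have hCA : Tendsto (fun t => C t / A t) atTop (𝓝 0) := by
    have h := hBA.div_const (1 - a2 ^ 2)
    rw [zero_div] at h
    exact h.congr fun t => by rw [hC t, div_right_comm]
  have hDbA : Tendsto (fun t => Db t / A t) atTop (𝓝 0) := by
    have h := hDb0.mul hinvA
    rw [mul_zero] at h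
    exact h.congr fun t => (div_eq_mul_inv _ _).symm
  have hDbB : Tendsto (fun t => Db t / B t) atTop (𝓝 0) := by
    have h := hDb0.mul hinvB
    rw [mul_zero] at h
    exact h.congr fun t => (div_eq_mul_inv _ _).symm
  have hDA : Tendsto (fun t => D t / A t) atTop (𝓝 0) := by
    have h := hD0.mul hinvA
    rw [mul_zero] at h
    exact h.congr fun t => (div_eq_mul_inv _ _).symm
  have hDB : Tendsto (fun t => D t / B t) atTop (𝓝 0) := by
    have h := hD0.mul hinvB
    rw [mul_zero] at h
    exact h.congr fun t => (div_eq_mul_inv _ _).symm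
  have hCbC : Tendsto (fun t => Cb t / C t) atTop (𝓝 (r * q)) := by
    refine (hBbB.mul_const q).congr fun t => ?_
    rw [hC t, hCb t, hqdef]
    simp only [div_eq_mul_inv, mul_inv, inv_inv]
    ring
  have hCB : Tendsto (fun t => C t / B t) atTop (𝓝 (1 / (1 - a2 ^ 2))) := by
    refine tendsto_const_nhds.congr' ?_
    filter_upwards [eventually_ge_atTop 0] with t ht
    obtain ⟨hPt, hP't, hAt, hBt, -⟩ := hpos t ht
    rw [hC t, div_div, mul_comm, ← div_div, div_self hBt.ne']
  -- nine term limits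
  have hT1 : Tendsto (fun t : ℝ =>
      ((A t - Ab t - a ^ 2 * Bb t - c ^ 2 * Cb t - d ^ 2 * Db t) / A t) ^ 2) atTop
      (𝓝 (((l1 - m1) * 0 - a ^ 2 * 0 - c ^ 2 * 0 - d ^ 2 * 0) ^ 2)) := by
    refine Tendsto.congr' ?_
      (((((hinvA.const_mul (l1 - m1)).sub (hBbA.const_mul (a ^ 2))).sub
        (hCbA.const_mul (c ^ 2))).sub (hDbA.const_mul (d ^ 2))).pow 2)
    filter_upwards [eventually_ge_atTop 0] with t ht
    obtain ⟨hPt, hP't, hAt, hBt, hCt, hDt, hBbt, hCbt, hDbt⟩ := hpos t ht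
    rw [hA t, hAb t]
    have hne : l1 + 4 * t ≠ 0 := by nlinarith
    field_simp
    ring
  have hT2 : Tendsto (fun t : ℝ =>
      ((B t - Bb t - b ^ 2 * Cb t - a ^ 2 * Db t) / B t) ^ 2) atTop
      (𝓝 ((1 - r - b ^ 2 * (r / (1 - a2' ^ 2)) - a ^ 2 * 0) ^ 2)) := by
    refine Tendsto.congr' ?_
      ((((tendsto_const_nhds.sub hBbB).sub (hCbB.const_mul (b ^ 2))).sub
        (hDbB.const_mul (a ^ 2))).pow 2)
    filter_upwards [eventually_ge_atTop 0] with t ht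
    obtain ⟨hPt, hP't, hAt, hBt, hCt, hDt, hBbt, hCbt, hDbt⟩ := hpos t ht
    field_simp
  have hT3 : Tendsto (fun t : ℝ => ((C t - Cb t) / C t) ^ 2) atTop
      (𝓝 ((1 - r * q) ^ 2)) := by
    refine Tendsto.congr' ?_ ((tendsto_const_nhds.sub hCbC).pow 2)
    filter_upwards [eventually_ge_atTop 0] with t ht
    obtain ⟨hPt, hP't, hAt, hBt, hCt, hDt, hBbt, hCbt, hDbt⟩ := hpos t ht
    field_simp
  have hT4 : Tendsto (fun t : ℝ => ((D t - Db t) / D t) ^ 2) atTop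
      (𝓝 ((1 - s) ^ 2)) := by
    refine Tendsto.congr' ?_ ((tendsto_const_nhds.sub hDbD).pow 2)
    filter_upwards [eventually_ge_atTop 0] with t ht
    obtain ⟨hPt, hP't, hAt, hBt, hCt, hDt, hBbt, hCbt, hDbt⟩ := hpos t ht
    field_simp
  have hT5 : Tendsto (fun t : ℝ =>
      2 * (a * Bb t + b * c * Cb t - a * d * Db t) ^ 2 / (A t * B t)) atTop
      (𝓝 (2 * (a * r + b * c * (r / (1 - a2' ^ 2)) - a * d * 0) ^ 2 * 0)) := by
    refine Tendsto.congr' ?_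
      ((((((hBbB.const_mul a).add (hCbB.const_mul (b * c))).sub
        (hDbB.const_mul (a * d))).pow 2).const_mul 2).mul hBA)
    filter_upwards [eventually_ge_atTop 0] with t ht
    obtain ⟨hPt, hP't, hAt, hBt, hCt, hDt, hBbt, hCbt, hDbt⟩ := hpos t ht
    show 2 * (a * (Bb t / B t) + b * c * (Cb t / B t) - a * d * (Db t / B t)) ^ 2
          * (B t / A t)
        = 2 * (a * Bb t + b * c * Cb t - a * d * Db t) ^ 2 / (A t * B t)
    field_simp
  have hT6 : Tendsto (fun t : ℝ => 2 * (c * Cb t) ^ 2 / (A t * C t)) atTop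
      (𝓝 (2 * (c * (r * q)) ^ 2 * 0)) := by
    refine Tendsto.congr' ?_ ((((hCbC.const_mul c).pow 2).const_mul 2).mul hCA)
    filter_upwards [eventually_ge_atTop 0] with t ht
    obtain ⟨hPt, hP't, hAt, hBt, hCt, hDt, hBbt, hCbt, hDbt⟩ := hpos t ht
    show 2 * (c * (Cb t / C t)) ^ 2 * (C t / A t) = 2 * (c * Cb t) ^ 2 / (A t * C t)
    field_simp
  have hT7 : Tendsto (fun t : ℝ => 2 * (d * Db t) ^ 2 / (A t * D t)) atTop
      (𝓝 (2 * (d * s) ^ 2 * 0)) := by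
    refine Tendsto.congr' ?_ ((((hDbD.const_mul d).pow 2).const_mul 2).mul hDA)
    filter_upwards [eventually_ge_atTop 0] with t ht
    obtain ⟨hPt, hP't, hAt, hBt, hCt, hDt, hBbt, hCbt, hDbt⟩ := hpos t ht
    show 2 * (d * (Db t / D t)) ^ 2 * (D t / A t) = 2 * (d * Db t) ^ 2 / (A t * D t)
    field_simp
  have hT8 : Tendsto (fun t : ℝ => 2 * (b * Cb t) ^ 2 / (B t * C t)) atTop
      (𝓝 (2 * (b * (r * q)) ^ 2 * (1 / (1 - a2 ^ 2)))) := by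
    refine Tendsto.congr' ?_ ((((hCbC.const_mul b).pow 2).const_mul 2).mul hCB)
    filter_upwards [eventually_ge_atTop 0] with t ht
    obtain ⟨hPt, hP't, hAt, hBt, hCt, hDt, hBbt, hCbt, hDbt⟩ := hpos t ht
    show 2 * (b * (Cb t / C t)) ^ 2 * (C t / B t) = 2 * (b * Cb t) ^ 2 / (B t * C t)
    field_simp
  have hT9 : Tendsto (fun t : ℝ => 2 * (a * Db t) ^ 2 / (B t * D t)) atTop
      (𝓝 (2 * (a * s) ^ 2 * 0)) := by
    refine Tendsto.congr' ?_ ((((hDbD.const_mul a).pow 2).const_mul 2).mul hDB)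
    filter_upwards [eventually_ge_atTop 0] with t ht
    obtain ⟨hPt, hP't, hAt, hBt, hCt, hDt, hBbt, hCbt, hDbt⟩ := hpos t ht
    show 2 * (a * (Db t / D t)) ^ 2 * (D t / B t) = 2 * (a * Db t) ^ 2 / (B t * D t)
    field_simp
  have key := ((((((((hT1.add hT2).add hT3).add hT4).add hT5).add hT6).add hT7).add
    hT8).add hT9)
  constructor
  · intro h
    have hLT := tendsto_nhds_unique key h
    have hclean : (1 - r - b ^ 2 * (r / (1 - a2' ^ 2))) ^ 2 + (1 - r * q) ^ 2
        + (1 - s) ^ 2 + 2 * (b * (r * q)) ^ 2 / (1 - a2 ^ 2) = 0 := by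
      rw [← hLT]; ring
    have hb0 : b = 0 := by
      have h9 : 0 ≤ 2 * (b * (r * q)) ^ 2 / (1 - a2 ^ 2) := by positivity
      have h8 : 2 * (b * (r * q)) ^ 2 / (1 - a2 ^ 2) = 0 := by
        nlinarith [sq_nonneg (1 - r - b ^ 2 * (r / (1 - a2' ^ 2))), sq_nonneg (1 - r * q),
          sq_nonneg (1 - s)]
      have h10 : (b * (r * q)) ^ 2 = 0 := by
        rcases div_eq_zero_iff.mp h8 with h' | h'
        · nlinarith [sq_nonneg (b * (r * q))]
        · exact absurd h' h1a2.ne'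
      rcases mul_eq_zero.mp ((pow_eq_zero_iff two_ne_zero).mp h10) with h' | h'
      · exact h'
      · exact absurd h' (mul_pos hrpos hqpos).ne'
    have ha2eq : a2' = a2 := by rw [hb] at hb0; linarith
    subst ha2eq
    refine ⟨rfl, ?_⟩
    have hq1 : q = 1 := by rw [hqdef]; exact div_self h1a2.ne'
    rw [hb0, hq1] at hclean
    norm_num at hclean
    have hr2 : (1 - r) ^ 2 = 0 := by nlinarith [sq_nonneg (1 - s), sq_nonneg (1 - r)]
    have hr1 : r = 1 := by
      have := (pow_eq_zero_iff two_ne_zero).mp hr2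
      linarith
    have h3 : ((k' / k) ^ ((1:ℝ)/3)) ^ (3:ℕ) = k' / k := by
      rw [← Real.rpow_natCast ((k' / k) ^ ((1:ℝ)/3)) 3,
        ← Real.rpow_mul (div_pos hk' hk).le]
      norm_num
    rw [← hrdef, hr1] at h3
    have hkk : k' = k := by
      have hx : k' / k = 1 := by simpa using h3.symm
      rw [div_eq_one_iff_eq hk.ne'] at hx
      exact hx
    rw [hkdef, hk'def] at hkk
    have h11 : (3 * (1 - a2' ^ 2)) * (m2 * m4) = (3 * (1 - a2' ^ 2)) * (l2 * l4) := by
      linear_combination hkk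
    exact mul_left_cancel₀ (by nlinarith : (3 * (1 - a2' ^ 2)) ≠ 0) h11
  · rintro ⟨h1, h2⟩
    subst h1
    have hb0 : b = 0 := by rw [hb]; ring
    have hkk : k' = k := by
      rw [hkdef, hk'def]; linear_combination (3 * (1 - a2' ^ 2)) * h2
    have hq1 : q = 1 := by rw [hqdef]; exact div_self h1a2.ne'
    have hr1 : r = 1 := by rw [hrdef, hkk, div_self hk.ne', Real.one_rpow]
    have hs1 : s = 1 := by
      rw [hsdef, hkk, div_self hk.ne', Real.one_rpow, h2,
        div_self (mul_pos hl2 hl4).ne', one_mul]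
    have hLT0 : ((l1 - m1) * 0 - a ^ 2 * 0 - c ^ 2 * 0 - d ^ 2 * 0) ^ 2
        + (1 - r - b ^ 2 * (r / (1 - a2' ^ 2)) - a ^ 2 * 0) ^ 2
        + (1 - r * q) ^ 2 + (1 - s) ^ 2
        + 2 * (a * r + b * c * (r / (1 - a2' ^ 2)) - a * d * 0) ^ 2 * 0
        + 2 * (c * (r * q)) ^ 2 * 0 + 2 * (d * s) ^ 2 * 0
        + 2 * (b * (r * q)) ^ 2 * (1 / (1 - a2' ^ 2)) + 2 * (a * s) ^ 2 * 0 = 0 := by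
      rw [hb0, hq1, hr1, hs1]; norm_num
    exact hLT0 ▸ key
end

section
/- Let λ₁,λ₂,λ₃,λ₄ and λ̄₁,λ̄₂,λ̄₃,λ̄₄ be positive reals. Suppose A,B,C,D : [0,∞) → (0,∞) are differentiable and satisfy dA/dt = C/B + B/C - 2, dB/dt = -B²/(AC) + C/A + D/C, dC/dt = -C²/(AB) + B/A + D/B, dD/dt = -D²/(BC) with A(0)=λ₁, B(0)=λ₂, C(0)=λ₃, D(0)=λ₄, and suppose (as holds for these solutions) that B(t) → ∞ and B(t)/C(t) → 1 as t → ∞. Let Ā,B̄,C̄,D̄ satisfy the same ODE system with initial data λ̄₁,λ̄₂,λ̄₃,λ̄₄ and the same asymptotic properties. Then ((A-Ā)/A)² + ((B-B̄)/B)² + ((C-C̄)/C)² + ((D-D̄)/D)² tends to 0 as t → ∞ if and only if λ̄₂λ̄₃λ̄₄² = λ₂λ₃λ₄² and λ̄₁λ̄₄(λ̄₂+λ̄₃) = λ₁λ₄(λ₂+λ₃); in particular once λ̄₂ and λ̄₄ are prescribed, λ̄₁ and λ̄₃ are determined, so the quasi-convergence class [g]_α is exactly a 2-parameter family. -/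
set_option maxHeartbeats 1000000

open Filter Set

open Filter Set

private lemma const_of_deriv_zero (f : ℝ → ℝ)
    (hf : ∀ x ∈ Set.Ici (0:ℝ), HasDerivWithinAt f 0 (Set.Ici (0:ℝ)) x) :
    ∀ t ∈ Set.Ici (0:ℝ), f t = f 0 := by
  intro t ht
  exact constant_of_has_deriv_right_zero
    (fun x hx => ((hf x hx.1).continuousWithinAt).mono Set.Icc_subset_Ici_self)
    (fun x hx => (hf x hx.1).mono (Set.Ici_subset_Ici.2 hx.1))
    t ⟨ht, le_rfl⟩

private lemma ratio_tendsto_one {X Xb : ℝ → ℝ}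
    (hX : ∀ t ∈ Set.Ici (0:ℝ), 0 < X t)
    (h : Tendsto (fun t => ((X t - Xb t) / X t) ^ 2) atTop (nhds 0)) :
    Tendsto (fun t => Xb t / X t) atTop (nhds 1) := by
  have habs : Tendsto (fun t => |(X t - Xb t) / X t|) atTop (nhds 0) := by
    simpa [Function.comp_def, Real.sqrt_sq_eq_abs] using
      (Real.continuous_sqrt.tendsto 0).comp h
  have h2 : Tendsto (fun t => (X t - Xb t) / X t) atTop (nhds 0) :=
    (tendsto_zero_iff_abs_tendsto_zero _).2 habs
  have h3 : Tendsto (fun t => 1 - (X t - Xb t) / X t) atTop (nhds 1) := by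
    simpa using tendsto_const_nhds.sub h2
  refine Tendsto.congr' ?_ h3
  filter_upwards [eventually_ge_atTop (0:ℝ)] with t ht
  have hx := (hX t ht).ne'
  field_simp
  ring

private lemma a8_facts (l1 l2 l3 l4 : ℝ)
    (hl1 : 0 < l1) (hl2 : 0 < l2) (hl3 : 0 < l3) (hl4 : 0 < l4)
    (A B C D : ℝ → ℝ)
    (hApos : ∀ t ∈ Set.Ici (0:ℝ), 0 < A t) (hBpos : ∀ t ∈ Set.Ici (0:ℝ), 0 < B t)
    (hCpos : ∀ t ∈ Set.Ici (0:ℝ), 0 < C t) (hDpos : ∀ t ∈ Set.Ici (0:ℝ), 0 < D t)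
    (hA : ∀ t ∈ Set.Ici (0:ℝ),
      HasDerivWithinAt A (C t / B t + B t / C t - 2) (Set.Ici 0) t)
    (hB : ∀ t ∈ Set.Ici (0:ℝ),
      HasDerivWithinAt B (-(B t) ^ 2 / (A t * C t) + C t / A t + D t / C t) (Set.Ici 0) t)
    (hC : ∀ t ∈ Set.Ici (0:ℝ),
      HasDerivWithinAt C (-(C t) ^ 2 / (A t * B t) + B t / A t + D t / B t) (Set.Ici 0) t)
    (hD : ∀ t ∈ Set.Ici (0:ℝ),
      HasDerivWithinAt D (-(D t) ^ 2 / (B t * C t)) (Set.Ici 0) t)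
    (hA0 : A 0 = l1) (hB0 : B 0 = l2) (hC0 : C 0 = l3) (hD0 : D 0 = l4)
    (hBClim : Tendsto (fun t => B t / C t) atTop (nhds 1)) :
    (∀ t ∈ Set.Ici (0:ℝ), A t * D t * (B t + C t) = l1 * l4 * (l2 + l3)) ∧
    (∀ t ∈ Set.Ici (0:ℝ), (D t)⁻¹ ^ 3 = l4⁻¹ ^ 3 + 3 * t / (l2 * l3 * l4 ^ 2)) ∧
    Tendsto (fun t => C t / B t) atTop (nhds 1) ∧
    Tendsto (fun t => B t * D t) atTop (nhds (Real.sqrt (l2 * l3 * l4 ^ 2))) := by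
  have hK : (0:ℝ) < l2 * l3 * l4 ^ 2 := by positivity
  have hP : ∀ t ∈ Set.Ici (0:ℝ), B t * C t * D t ^ 2 = l2 * l3 * l4 ^ 2 := by
    have h0 : ∀ x ∈ Set.Ici (0:ℝ),
        HasDerivWithinAt (fun t => B t * C t * D t ^ 2) 0 (Set.Ici 0) x := by
      intro x hx
      have hAx := (hApos x hx).ne'
      have hBx := (hBpos x hx).ne'
      have hCx := (hCpos x hx).ne'
      have h1 := ((hB x hx).mul (hC x hx)).mul ((hD x hx).pow 2)
      refine h1.congr_deriv ?_
      symm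
      simp only [Pi.mul_apply, Pi.pow_apply, Pi.add_apply, Pi.inv_apply, Nat.cast_ofNat]
      field_simp
      ring
    intro t ht
    have := const_of_deriv_zero _ h0 t ht
    simpa [hB0, hC0, hD0] using this
  have hQ : ∀ t ∈ Set.Ici (0:ℝ), A t * D t * (B t + C t) = l1 * l4 * (l2 + l3) := by
    have h0 : ∀ x ∈ Set.Ici (0:ℝ),
        HasDerivWithinAt (fun t => A t * D t * (B t + C t)) 0 (Set.Ici 0) x := by
      intro x hx
      have hAx := (hApos x hx).ne'
      have hBx := (hBpos x hx).ne'
      have hCx := (hCpos x hx).ne'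
      have h1 := ((hA x hx).mul (hD x hx)).mul ((hB x hx).add (hC x hx))
      refine h1.congr_deriv ?_
      symm
      simp only [Pi.mul_apply, Pi.pow_apply, Pi.add_apply, Pi.inv_apply, Nat.cast_ofNat]
      field_simp
      ring
    intro t ht
    have := const_of_deriv_zero _ h0 t ht
    simpa [hA0, hB0, hC0, hD0] using this
  have hX : ∀ t ∈ Set.Ici (0:ℝ), (D t)⁻¹ ^ 3 = l4⁻¹ ^ 3 + 3 * t / (l2 * l3 * l4 ^ 2) := by
    have h0 : ∀ x ∈ Set.Ici (0:ℝ),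
        HasDerivWithinAt (fun t => (D t)⁻¹ ^ 3 - 3 * t / (l2 * l3 * l4 ^ 2)) 0 (Set.Ici 0) x := by
      intro x hx
      have hBx := (hBpos x hx).ne'
      have hCx := (hCpos x hx).ne'
      have hDx := (hDpos x hx).ne'
      have h2 : HasDerivWithinAt (fun t : ℝ => 3 * t / (l2 * l3 * l4 ^ 2))
          (3 / (l2 * l3 * l4 ^ 2)) (Set.Ici 0) x := by
        simpa using ((hasDerivWithinAt_id x (Set.Ici 0)).const_mul (3:ℝ)).div_const
          (l2 * l3 * l4 ^ 2)
      have h1 := (((hD x hx).inv hDx).pow 3).sub h2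
      refine h1.congr_deriv ?_
      symm
      simp only [Pi.mul_apply, Pi.pow_apply, Pi.add_apply, Pi.inv_apply, Nat.cast_ofNat, Nat.reduceSub]
      rw [← hP x hx]
      field_simp
      ring
    intro t ht
    have := const_of_deriv_zero _ h0 t ht
    simp only [hD0, mul_zero, zero_mul, zero_div, sub_zero] at this
    linarith [this]
  refine ⟨hQ, hX, ?_, ?_⟩
  · have := hBClim.inv₀ one_ne_zero
    simpa [inv_div] using this
  · have h1 : Tendsto (fun t => (l2 * l3 * l4 ^ 2) * (B t / C t)) atTop
        (nhds (l2 * l3 * l4 ^ 2)) := by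
      simpa using hBClim.const_mul (l2 * l3 * l4 ^ 2)
    have h2 := (Real.continuous_sqrt.tendsto (l2 * l3 * l4 ^ 2)).comp h1
    refine Tendsto.congr' ?_ h2
    filter_upwards [eventually_ge_atTop (0:ℝ)] with t ht
    have hBt := hBpos t ht
    have hCt := hCpos t ht
    have hDt := hDpos t ht
    have key : l2 * l3 * l4 ^ 2 * (B t / C t) = (B t * D t) ^ 2 := by
      rw [← hP t ht]; field_simp
    simp only [Function.comp_def, key]
    exact Real.sqrt_sq (by positivity)


/-- class A8: for solutions of the A8 Ricci-flow ODE system,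
quasi-convergence in the same frame holds iff `λ̄₂λ̄₃λ̄₄² = λ₂λ₃λ₄²` and
`λ̄₁λ̄₄(λ̄₂+λ̄₃) = λ₁λ₄(λ₂+λ₃)`; `[g]_α` is a 2-parameter family. -/
theorem stmt_13 (l1 l2 l3 l4 m1 m2 m3 m4 : ℝ)
    (hl1 : 0 < l1) (hl2 : 0 < l2) (hl3 : 0 < l3) (hl4 : 0 < l4)
    (hm1 : 0 < m1) (hm2 : 0 < m2) (hm3 : 0 < m3) (hm4 : 0 < m4)
    (A B C D Ab Bb Cb Db : ℝ → ℝ)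
    (hApos : ∀ t ∈ Set.Ici (0:ℝ), 0 < A t) (hBpos : ∀ t ∈ Set.Ici (0:ℝ), 0 < B t)
    (hCpos : ∀ t ∈ Set.Ici (0:ℝ), 0 < C t) (hDpos : ∀ t ∈ Set.Ici (0:ℝ), 0 < D t)
    (hAbpos : ∀ t ∈ Set.Ici (0:ℝ), 0 < Ab t) (hBbpos : ∀ t ∈ Set.Ici (0:ℝ), 0 < Bb t)
    (hCbpos : ∀ t ∈ Set.Ici (0:ℝ), 0 < Cb t) (hDbpos : ∀ t ∈ Set.Ici (0:ℝ), 0 < Db t)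
    (hA : ∀ t ∈ Set.Ici (0:ℝ),
      HasDerivWithinAt A (C t / B t + B t / C t - 2) (Set.Ici 0) t)
    (hB : ∀ t ∈ Set.Ici (0:ℝ),
      HasDerivWithinAt B (-(B t) ^ 2 / (A t * C t) + C t / A t + D t / C t) (Set.Ici 0) t)
    (hC : ∀ t ∈ Set.Ici (0:ℝ),
      HasDerivWithinAt C (-(C t) ^ 2 / (A t * B t) + B t / A t + D t / B t) (Set.Ici 0) t)
    (hD : ∀ t ∈ Set.Ici (0:ℝ),
      HasDerivWithinAt D (-(D t) ^ 2 / (B t * C t)) (Set.Ici 0) t)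
    (hA0 : A 0 = l1) (hB0 : B 0 = l2) (hC0 : C 0 = l3) (hD0 : D 0 = l4)
    (hBlim : Filter.Tendsto B Filter.atTop Filter.atTop)
    (hBClim : Filter.Tendsto (fun t => B t / C t) Filter.atTop (nhds 1))
    (hAb : ∀ t ∈ Set.Ici (0:ℝ),
      HasDerivWithinAt Ab (Cb t / Bb t + Bb t / Cb t - 2) (Set.Ici 0) t)
    (hBb : ∀ t ∈ Set.Ici (0:ℝ),
      HasDerivWithinAt Bb (-(Bb t) ^ 2 / (Ab t * Cb t) + Cb t / Ab t + Db t / Cb t) (Set.Ici 0) t)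
    (hCb : ∀ t ∈ Set.Ici (0:ℝ),
      HasDerivWithinAt Cb (-(Cb t) ^ 2 / (Ab t * Bb t) + Bb t / Ab t + Db t / Bb t) (Set.Ici 0) t)
    (hDb : ∀ t ∈ Set.Ici (0:ℝ),
      HasDerivWithinAt Db (-(Db t) ^ 2 / (Bb t * Cb t)) (Set.Ici 0) t)
    (hAb0 : Ab 0 = m1) (hBb0 : Bb 0 = m2) (hCb0 : Cb 0 = m3) (hDb0 : Db 0 = m4)
    (hBblim : Filter.Tendsto Bb Filter.atTop Filter.atTop)
    (hBbClim : Filter.Tendsto (fun t => Bb t / Cb t) Filter.atTop (nhds 1)) :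
    Filter.Tendsto (fun t : ℝ =>
        ((A t - Ab t) / A t) ^ 2 + ((B t - Bb t) / B t) ^ 2 +
        ((C t - Cb t) / C t) ^ 2 + ((D t - Db t) / D t) ^ 2)
      Filter.atTop (nhds 0) ↔
      (m2 * m3 * m4 ^ 2 = l2 * l3 * l4 ^ 2 ∧
       m1 * m4 * (m2 + m3) = l1 * l4 * (l2 + l3)) := by
  obtain ⟨hQ, hX, hCB, hBD⟩ := a8_facts l1 l2 l3 l4 hl1 hl2 hl3 hl4 A B C D
    hApos hBpos hCpos hDpos hA hB hC hD hA0 hB0 hC0 hD0 hBClim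
  obtain ⟨hQb, hXb, hCBb, hBbD⟩ := a8_facts m1 m2 m3 m4 hm1 hm2 hm3 hm4 Ab Bb Cb Db
    hAbpos hBbpos hCbpos hDbpos hAb hBb hCb hDb hAb0 hBb0 hCb0 hDb0 hBbClim
  have hK : (0:ℝ) < l2 * l3 * l4 ^ 2 := by positivity
  have hKb : (0:ℝ) < m2 * m3 * m4 ^ 2 := by positivity
  have hL : (0:ℝ) < l1 * l4 * (l2 + l3) := by positivity
  -- the master limit for the D-ratio cubed
  have hcube : Tendsto (fun t => (Db t / D t) ^ 3) atTop
      (nhds ((m2 * m3 * m4 ^ 2) / (l2 * l3 * l4 ^ 2))) := by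
    have hnum : Tendsto (fun t : ℝ => l4⁻¹ ^ 3 / t + 3 / (l2 * l3 * l4 ^ 2)) atTop
        (nhds (0 + 3 / (l2 * l3 * l4 ^ 2))) :=
      (tendsto_const_nhds.div_atTop tendsto_id).add tendsto_const_nhds
    have hden : Tendsto (fun t : ℝ => m4⁻¹ ^ 3 / t + 3 / (m2 * m3 * m4 ^ 2)) atTop
        (nhds (0 + 3 / (m2 * m3 * m4 ^ 2))) :=
      (tendsto_const_nhds.div_atTop tendsto_id).add tendsto_const_nhds
    rw [zero_add] at hnum hden
    have hdiv := hnum.div hden (by positivity)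
    have heq : 3 / (l2 * l3 * l4 ^ 2) / (3 / (m2 * m3 * m4 ^ 2))
        = (m2 * m3 * m4 ^ 2) / (l2 * l3 * l4 ^ 2) := by
      field_simp
    rw [heq] at hdiv
    refine Tendsto.congr' ?_ hdiv
    filter_upwards [eventually_ge_atTop (1:ℝ)] with t ht
    have ht0 : (0:ℝ) ≤ t := by linarith
    have htne : t ≠ 0 := by intro h; rw [h] at ht; linarith
    have hDt := (hDpos t ht0).ne'
    have hDbt := (hDbpos t ht0).ne'
    have e1 : l4⁻¹ ^ 3 / t + 3 / (l2 * l3 * l4 ^ 2) = (D t)⁻¹ ^ 3 / t := by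
      rw [hX t ht0]; field_simp
    have e2 : m4⁻¹ ^ 3 / t + 3 / (m2 * m3 * m4 ^ 2) = (Db t)⁻¹ ^ 3 / t := by
      rw [hXb t ht0]; field_simp
    simp only [Pi.div_apply]
    rw [e1, e2]
    field_simp
  constructor
  · intro h
    have e1 : Tendsto (fun t => ((A t - Ab t) / A t) ^ 2) atTop (nhds 0) :=
      squeeze_zero (fun t => sq_nonneg _) (fun t => by
        nlinarith [sq_nonneg ((B t - Bb t) / B t), sq_nonneg ((C t - Cb t) / C t),
          sq_nonneg ((D t - Db t) / D t)]) h
    have e2 : Tendsto (fun t => ((B t - Bb t) / B t) ^ 2) atTop (nhds 0) :=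
      squeeze_zero (fun t => sq_nonneg _) (fun t => by
        nlinarith [sq_nonneg ((A t - Ab t) / A t), sq_nonneg ((C t - Cb t) / C t),
          sq_nonneg ((D t - Db t) / D t)]) h
    have e4 : Tendsto (fun t => ((D t - Db t) / D t) ^ 2) atTop (nhds 0) :=
      squeeze_zero (fun t => sq_nonneg _) (fun t => by
        nlinarith [sq_nonneg ((A t - Ab t) / A t), sq_nonneg ((B t - Bb t) / B t),
          sq_nonneg ((C t - Cb t) / C t)]) h
    have hAr := ratio_tendsto_one hApos e1
    have hBr := ratio_tendsto_one hBpos e2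
    have hDr := ratio_tendsto_one hDpos e4
    have hcube1 : Tendsto (fun t => (Db t / D t) ^ 3) atTop (nhds 1) := by
      simpa using hDr.pow 3
    have hKK := tendsto_nhds_unique hcube hcube1
    have hKeq : m2 * m3 * m4 ^ 2 = l2 * l3 * l4 ^ 2 := (div_eq_one_iff_eq hK.ne').1 hKK
    refine ⟨hKeq, ?_⟩
    have hfrac : Tendsto (fun t => (1 + Cb t / Bb t) / (1 + C t / B t)) atTop (nhds 1) := by
      have hn : Tendsto (fun t => 1 + Cb t / Bb t) atTop (nhds (1 + 1)) :=
        tendsto_const_nhds.add hCBb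
      have hd : Tendsto (fun t => 1 + C t / B t) atTop (nhds (1 + 1)) :=
        tendsto_const_nhds.add hCB
      have := hn.div hd (by norm_num)
      rw [show ((1:ℝ) + 1) / (1 + 1) = 1 by norm_num] at this
      exact this
    have hprod := (hAr.mul hDr).mul (hBr.mul hfrac)
    rw [show (1:ℝ) * 1 * (1 * 1) = 1 by norm_num] at hprod
    have hconst : Tendsto (fun _ : ℝ => (m1 * m4 * (m2 + m3)) / (l1 * l4 * (l2 + l3)))
        atTop (nhds 1) := by
      refine Tendsto.congr' ?_ hprod
      filter_upwards [eventually_ge_atTop (0:ℝ)] with t ht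
      have hAt := (hApos t ht).ne'
      have hBt := (hBpos t ht).ne'
      have hCt := (hCpos t ht).ne'
      have hDt := (hDpos t ht).ne'
      have hAbt := (hAbpos t ht).ne'
      have hBbt := (hBbpos t ht).ne'
      have hCbt := (hCbpos t ht).ne'
      have hDbt := (hDbpos t ht).ne'
      have eCb : 1 + Cb t / Bb t = (Bb t + Cb t) / Bb t := by field_simp
      have eC : 1 + C t / B t = (B t + C t) / B t := by field_simp
      have hBCt : B t + C t ≠ 0 := (add_pos (hBpos t ht) (hCpos t ht)).ne'
      have hBCbt : Bb t + Cb t ≠ 0 := (add_pos (hBbpos t ht) (hCbpos t ht)).ne'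
      rw [← hQ t ht, ← hQb t ht, eCb, eC]
      field_simp
    have h1 := tendsto_nhds_unique hconst tendsto_const_nhds
    exact (div_eq_one_iff_eq hL.ne').1 h1.symm
  · rintro ⟨hKeq, hLeq⟩
    rw [hKeq, div_self hK.ne'] at hcube
    have hDr : Tendsto (fun t => Db t / D t) atTop (nhds 1) := by
      have h1 := hcube.rpow_const (p := ((3:ℕ):ℝ)⁻¹) (Or.inl one_ne_zero)
      rw [Real.one_rpow] at h1
      refine Tendsto.congr' ?_ h1
      filter_upwards [eventually_ge_atTop (0:ℝ)] with t ht
      exact Real.pow_rpow_inv_natCast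
        (div_nonneg (hDbpos t ht).le (hDpos t ht).le) three_ne_zero
    have hDrinv : Tendsto (fun t => D t / Db t) atTop (nhds 1) := by
      simpa [inv_div] using hDr.inv₀ one_ne_zero
    rw [hKeq] at hBbD
    have hsK : Real.sqrt (l2 * l3 * l4 ^ 2) ≠ 0 := (Real.sqrt_pos.2 hK).ne'
    have hBr : Tendsto (fun t => Bb t / B t) atTop (nhds 1) := by
      have h1 := (hBbD.div hBD hsK).mul hDrinv
      rw [div_self hsK, one_mul] at h1
      refine Tendsto.congr' ?_ h1
      filter_upwards [eventually_ge_atTop (0:ℝ)] with t ht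
      have hBt := (hBpos t ht).ne'
      have hDt := (hDpos t ht).ne'
      have hBbt := (hBbpos t ht).ne'
      have hDbt := (hDbpos t ht).ne'
      simp only [Pi.div_apply]
      field_simp
    have hBrinv : Tendsto (fun t => B t / Bb t) atTop (nhds 1) := by
      simpa [inv_div] using hBr.inv₀ one_ne_zero
    have hCr : Tendsto (fun t => Cb t / C t) atTop (nhds 1) := by
      have h1 := (hBr.mul hCBb).mul hBClim
      rw [show (1:ℝ) * 1 * 1 = 1 by norm_num] at h1
      refine Tendsto.congr' ?_ h1
      filter_upwards [eventually_ge_atTop (0:ℝ)] with t ht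
      have hBt := (hBpos t ht).ne'
      have hCt := (hCpos t ht).ne'
      have hBbt := (hBbpos t ht).ne'
      have hCbt := (hCbpos t ht).ne'
      field_simp
    have hfrac : Tendsto (fun t => (1 + C t / B t) / (1 + Cb t / Bb t)) atTop (nhds 1) := by
      have hn : Tendsto (fun t => 1 + C t / B t) atTop (nhds (1 + 1)) :=
        tendsto_const_nhds.add hCB
      have hd : Tendsto (fun t => 1 + Cb t / Bb t) atTop (nhds (1 + 1)) :=
        tendsto_const_nhds.add hCBb
      have := hn.div hd (by norm_num)
      rw [show ((1:ℝ) + 1) / (1 + 1) = 1 by norm_num] at this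
      exact this
    have hAr : Tendsto (fun t => Ab t / A t) atTop (nhds 1) := by
      have h1 := (hDrinv.mul hBrinv).mul hfrac
      rw [show (1:ℝ) * 1 * 1 = 1 by norm_num] at h1
      refine Tendsto.congr' ?_ h1
      filter_upwards [eventually_ge_atTop (0:ℝ)] with t ht
      have hAt := (hApos t ht).ne'
      have hBt := (hBpos t ht).ne'
      have hCt := (hCpos t ht).ne'
      have hDt := (hDpos t ht).ne'
      have hAbt := (hAbpos t ht).ne'
      have hBbt := (hBbpos t ht).ne'
      have hCbt := (hCbpos t ht).ne'
      have hDbt := (hDbpos t ht).ne'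
      have hBCt : B t + C t ≠ 0 := (add_pos (hBpos t ht) (hCpos t ht)).ne'
      have hBCbt : Bb t + Cb t ≠ 0 := (add_pos (hBbpos t ht) (hCbpos t ht)).ne'
      have eCb : 1 + Cb t / Bb t = (Bb t + Cb t) / Bb t := by field_simp
      have eC : 1 + C t / B t = (B t + C t) / B t := by field_simp
      have hAe : A t = (l1 * l4 * (l2 + l3)) / (D t * (B t + C t)) := by
        rw [← hQ t ht]; field_simp
      have hAbe : Ab t = (m1 * m4 * (m2 + m3)) / (Db t * (Bb t + Cb t)) := by
        rw [← hQb t ht]; field_simp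
      rw [eC, eCb, hAe, hAbe, hLeq]
      field_simp
    have t1 : Tendsto (fun t => ((A t - Ab t) / A t) ^ 2) atTop (nhds 0) := by
      have h1 := ((tendsto_const_nhds (x := (1:ℝ))).sub hAr).pow 2
      rw [show ((1:ℝ) - 1) ^ 2 = 0 by norm_num] at h1
      refine Tendsto.congr' ?_ h1
      filter_upwards [eventually_ge_atTop (0:ℝ)] with t ht
      rw [sub_div, div_self (hApos t ht).ne']
    have t2 : Tendsto (fun t => ((B t - Bb t) / B t) ^ 2) atTop (nhds 0) := by
      have h1 := ((tendsto_const_nhds (x := (1:ℝ))).sub hBr).pow 2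
      rw [show ((1:ℝ) - 1) ^ 2 = 0 by norm_num] at h1
      refine Tendsto.congr' ?_ h1
      filter_upwards [eventually_ge_atTop (0:ℝ)] with t ht
      rw [sub_div, div_self (hBpos t ht).ne']
    have t3 : Tendsto (fun t => ((C t - Cb t) / C t) ^ 2) atTop (nhds 0) := by
      have h1 := ((tendsto_const_nhds (x := (1:ℝ))).sub hCr).pow 2
      rw [show ((1:ℝ) - 1) ^ 2 = 0 by norm_num] at h1
      refine Tendsto.congr' ?_ h1
      filter_upwards [eventually_ge_atTop (0:ℝ)] with t ht
      rw [sub_div, div_self (hCpos t ht).ne']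
    have t4 : Tendsto (fun t => ((D t - Db t) / D t) ^ 2) atTop (nhds 0) := by
      have h1 := ((tendsto_const_nhds (x := (1:ℝ))).sub hDr).pow 2
      rw [show ((1:ℝ) - 1) ^ 2 = 0 by norm_num] at h1
      refine Tendsto.congr' ?_ h1
      filter_upwards [eventually_ge_atTop (0:ℝ)] with t ht
      rw [sub_div, div_self (hDpos t ht).ne']
    simpa using ((t1.add t2).add t3).add t4
end

section
/- Let λ₁,λ₂,λ₃,λ₄ and λ̄₁,λ̄₂,λ̄₃,λ̄₄ be positive reals and let a,b,c be real numbers. Suppose A,B,C,D : [0,∞) → (0,∞) are differentiable and satisfy dA/dt = C/B + B/C - 2, dB/dt = -B²/(AC) + C/A + D/C, dC/dt = -C²/(AB) + B/A + D/B, dD/dt = -D²/(BC) with A(0)=λ₁, B(0)=λ₂, C(0)=λ₃, D(0)=λ₄, with B(t) → ∞ and B(t)/C(t) → 1 as t → ∞; let Ā,B̄,C̄,D̄ satisfy the same ODE system with initial data λ̄₁,λ̄₂,λ̄₃,λ̄₄ and the same asymptotic properties. Then the quantity ((A-Ā-a²B̄-b²C̄-c²D̄)/A)² + ((B-B̄-a²D̄)/B)²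 + ((C-C̄-b²D̄)/C)² + ((D-D̄)/D)² + 2(aB̄+acD̄)²/(AB) + 2(bC̄+bcD̄)²/(AC) + 2(cD̄)²/(AD) + 2(abD̄)²/(BC) + 2(aD̄)²/(BD) + 2(bD̄)²/(CD) tends to 0 as t → ∞ if and only if a = 0, b = 0, λ̄₂λ̄₃λ̄₄² = λ₂λ₃λ₄² and λ̄₁λ̄₄(λ̄₂+λ̄₃) = λ₁λ₄(λ₂+λ₃); in particular the quasi-convergence class [g] is exactly a 2-parameter family. -/
open Filter Set Topology

private lemma constOn {f : ℝ → ℝ}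
    (hf : ∀ t ∈ Ici (0:ℝ), HasDerivWithinAt f 0 (Ici 0) t) :
    ∀ t ∈ Ici (0:ℝ), f t = f 0 := by
  intro t ht
  have hcont : ContinuousOn f (Icc 0 t) := fun x hx =>
    ((hf x hx.1).continuousWithinAt).mono Icc_subset_Ici_self
  exact constant_of_has_deriv_right_zero hcont
    (fun x hx => (hf x hx.1).mono (Ici_subset_Ici.2 hx.1)) t (right_mem_Icc.2 ht)

private lemma affineOn {f : ℝ → ℝ} {c : ℝ}
    (hf : ∀ t ∈ Ici (0:ℝ), HasDerivWithinAt f c (Ici 0) t) :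
    ∀ t ∈ Ici (0:ℝ), f t = f 0 + c * t := by
  have h : ∀ t ∈ Ici (0:ℝ), HasDerivWithinAt (fun t => f t - c * t) 0 (Ici 0) t := by
    intro t ht
    refine ((hf t ht).sub ((hasDerivWithinAt_id t (Ici 0)).const_mul c)).congr_deriv ?_
    ring
  intro t ht
  have := constOn h t ht
  simp only [mul_zero, sub_zero] at this
  linarith

private lemma tendsto_ratio_affine (p q r s : ℝ) (hs : s ≠ 0) :
    Tendsto (fun t : ℝ => (p + q * t) / (r + s * t)) atTop (nhds (q / s)) := by
  have h1 : Tendsto (fun t : ℝ => (p * t⁻¹ + q) / (r * t⁻¹ + s)) atTop (nhds (q / s)) := by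
    have hq : Tendsto (fun t : ℝ => p * t⁻¹ + q) atTop (nhds q) := by
      simpa using (tendsto_inv_atTop_zero.const_mul p).add_const q
    have hr : Tendsto (fun t : ℝ => r * t⁻¹ + s) atTop (nhds s) := by
      simpa using (tendsto_inv_atTop_zero.const_mul r).add_const s
    exact hq.div hr hs
  refine h1.congr' ?_
  filter_upwards [eventually_ne_atTop (0:ℝ)] with t ht
  rcases eq_or_ne (r + s * t) 0 with h | h
  · have h2 : r * t⁻¹ + s = 0 := by field_simp; linarith [h]
    rw [h, h2, div_zero, div_zero]
  · field_simp


private lemma tendsto_one_of_pow {f : ℝ → ℝ} (n : ℕ) (hn : n ≠ 0)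
    (h0 : ∀ᶠ t in atTop, 0 ≤ f t)
    (h : Tendsto (fun t => f t ^ n) atTop (nhds 1)) :
    Tendsto f atTop (nhds 1) := by
  have hcont : ContinuousAt (fun x : ℝ => x ^ ((n : ℝ)⁻¹)) 1 :=
    Real.continuousAt_rpow_const 1 _ (Or.inl one_ne_zero)
  have h2 : Tendsto (fun t => (f t ^ n) ^ ((n : ℝ)⁻¹)) atTop (nhds 1) := by
    have := hcont.tendsto.comp h
    simpa [Function.comp_def] using this
  refine h2.congr' ?_
  filter_upwards [h0] with t ht
  rw [← Real.rpow_natCast (f t) n, ← Real.rpow_mul ht,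
    mul_inv_cancel₀ (by exact_mod_cast hn), Real.rpow_one]

private lemma sqz {f : ℝ → ℝ} (h : Tendsto (fun t => f t ^ 2) atTop (nhds 0)) :
    Tendsto f atTop (nhds 0) := by
  have h1 : Tendsto (fun t => |f t|) atTop (nhds 0) := by
    have := h.sqrt
    simpa [Real.sqrt_sq_eq_abs] using this
  exact (tendsto_zero_iff_abs_tendsto_zero f).2 h1

private lemma cubeTop {f : ℝ → ℝ} (h0 : ∀ᶠ t in atTop, 0 ≤ f t)
    (h : Tendsto (fun t => f t ^ 3) atTop atTop) : Tendsto f atTop atTop := by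
  have h2 : Tendsto (fun t => (f t ^ 3) ^ ((3:ℝ)⁻¹)) atTop atTop :=
    (tendsto_rpow_atTop (by norm_num)).comp h
  refine h2.congr' ?_
  filter_upwards [h0] with t ht
  rw [← Real.rpow_natCast (f t) 3, ← Real.rpow_mul ht]
  norm_num

private lemma constOn' {f : ℝ → ℝ}
    (hf : ∀ t ∈ Ici (0:ℝ), HasDerivWithinAt f 0 (Ici 0) t) :
    ∀ t ∈ Ici (0:ℝ), f t = f 0 := by
  intro t ht
  have hcont : ContinuousOn f (Icc 0 t) := fun x hx =>
    ((hf x hx.1).continuousWithinAt).mono Icc_subset_Ici_self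
  exact constant_of_has_deriv_right_zero hcont
    (fun x hx => (hf x hx.1).mono (Ici_subset_Ici.2 hx.1)) t (right_mem_Icc.2 ht)

private lemma solFacts (l1 l2 l3 l4 : ℝ)
    (hl1 : 0 < l1) (hl2 : 0 < l2) (hl3 : 0 < l3) (hl4 : 0 < l4)
    (A B C D : ℝ → ℝ)
    (hApos : ∀ t ∈ Set.Ici (0:ℝ), 0 < A t) (hBpos : ∀ t ∈ Set.Ici (0:ℝ), 0 < B t)
    (hCpos : ∀ t ∈ Set.Ici (0:ℝ), 0 < C t) (hDpos : ∀ t ∈ Set.Ici (0:ℝ), 0 < D t)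
    (hA : ∀ t ∈ Set.Ici (0:ℝ),
      HasDerivWithinAt A (C t / B t + B t / C t - 2) (Set.Ici 0) t)
    (hB : ∀ t ∈ Set.Ici (0:ℝ),
      HasDerivWithinAt B (-(B t) ^ 2 / (A t * C t) + C t / A t + D t / C t) (Set.Ici 0) t)
    (hC : ∀ t ∈ Set.Ici (0:ℝ),
      HasDerivWithinAt C (-(C t) ^ 2 / (A t * B t) + B t / A t + D t / B t) (Set.Ici 0) t)
    (hD : ∀ t ∈ Set.Ici (0:ℝ),
      HasDerivWithinAt D (-(D t) ^ 2 / (B t * C t)) (Set.Ici 0) t)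
    (hA0 : A 0 = l1) (hB0 : B 0 = l2) (hC0 : C 0 = l3) (hD0 : D 0 = l4) :
    (∀ t ∈ Ici (0:ℝ), B t * C t * D t ^ 2 = l2 * l3 * l4 ^ 2) ∧
    (∀ t ∈ Ici (0:ℝ), A t * D t * (B t + C t) = l1 * l4 * (l2 + l3)) ∧
    (∀ t ∈ Ici (0:ℝ), (D t)⁻¹ ^ 3 = (l4⁻¹) ^ 3 + 3 / (l2 * l3 * l4 ^ 2) * t) ∧
    (∀ t ∈ Ici (0:ℝ), l1 ≤ A t) := by
  have hK : ∀ t ∈ Ici (0:ℝ), B t * C t * D t ^ 2 = l2 * l3 * l4 ^ 2 := by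
    have h0 : ∀ t ∈ Ici (0:ℝ),
        HasDerivWithinAt (fun t => B t * C t * D t ^ 2) 0 (Ici 0) t := by
      intro t ht
      have hAne := (hApos t ht).ne'
      have hBne := (hBpos t ht).ne'
      have hCne := (hCpos t ht).ne'
      have hDne := (hDpos t ht).ne'
      have h := ((hB t ht).mul (hC t ht)).mul ((hD t ht).pow 2)
      refine h.congr_deriv ?_
      simp only [Pi.mul_apply, Pi.pow_apply, Pi.add_apply]
      field_simp
      ring
    intro t ht
    have := constOn' h0 t ht
    simpa [hB0, hC0, hD0] using this
  have hL : ∀ t ∈ Ici (0:ℝ), A t * D t * (B t + C t) = l1 * l4 * (l2 + l3) := by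
    have h0 : ∀ t ∈ Ici (0:ℝ),
        HasDerivWithinAt (fun t => A t * D t * (B t + C t)) 0 (Ici 0) t := by
      intro t ht
      have hAne := (hApos t ht).ne'
      have hBne := (hBpos t ht).ne'
      have hCne := (hCpos t ht).ne'
      have hDne := (hDpos t ht).ne'
      have h := ((hA t ht).mul (hD t ht)).mul ((hB t ht).add (hC t ht))
      refine h.congr_deriv ?_
      simp only [Pi.mul_apply, Pi.pow_apply, Pi.add_apply]
      field_simp
      ring
    intro t ht
    have := constOn' h0 t ht
    simpa [hA0, hB0, hC0, hD0] using this
  have hDf : ∀ t ∈ Ici (0:ℝ), (D t)⁻¹ ^ 3 = (l4⁻¹) ^ 3 + 3 / (l2 * l3 * l4 ^ 2) * t := by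
    have h0 : ∀ t ∈ Ici (0:ℝ),
        HasDerivWithinAt (fun t => (D t)⁻¹ ^ 3 - 3 / (l2 * l3 * l4 ^ 2) * t) 0 (Ici 0) t := by
      intro t ht
      have hBne := (hBpos t ht).ne'
      have hCne := (hCpos t ht).ne'
      have hDne := (hDpos t ht).ne'
      have hk := hK t ht
      have h := (((hD t ht).inv hDne).pow 3).sub
        ((hasDerivWithinAt_id t (Ici 0)).const_mul (3 / (l2 * l3 * l4 ^ 2)))
      refine h.congr_deriv ?_
      have hKne : l2 * l3 * l4 ^ 2 ≠ 0 := by positivity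
      norm_num only [Pi.inv_apply]
      field_simp
      nlinarith [hk, sq_nonneg (D t)]
    intro t ht
    have := constOn' h0 t ht
    simp only [hD0, mul_zero, sub_zero] at this
    linarith
  have hAmono : ∀ t ∈ Ici (0:ℝ), l1 ≤ A t := by
    have hm : MonotoneOn A (Ici (0:ℝ)) := by
      refine monotoneOn_of_hasDerivWithinAt_nonneg (convex_Ici 0)
        (fun x hx => (hA x hx).continuousWithinAt)
        (f' := fun t => C t / B t + B t / C t - 2)
        (fun x hx => ((hA x (interior_subset hx)).mono interior_subset)) ?_
      intro x hx
      have hx' : x ∈ Ici (0:ℝ) := interior_subset hx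
      have hb := hBpos x hx'
      have hc := hCpos x hx'
      have h : C x / B x + B x / C x - 2 = (B x - C x) ^ 2 / (B x * C x) := by
        field_simp
        ring
      show 0 ≤ C x / B x + B x / C x - 2
      rw [h]
      positivity
    intro t ht
    have := hm (self_mem_Ici) ht ht
    rwa [hA0] at this
  exact ⟨hK, hL, hDf, hAmono⟩

set_option maxHeartbeats 2000000 in
/-- class A8, different frames: quasi-convergence holds iff
`a = 0`, `b = 0`, `λ̄₂λ̄₃λ̄₄² = λ₂λ₃λ₄²` and `λ̄₁λ̄₄(λ̄₂+λ̄₃) = λ₁λ₄(λ₂+λ₃)`;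
`[g]` is a 2-parameter family. -/
theorem stmt_14 (l1 l2 l3 l4 m1 m2 m3 m4 a b c : ℝ)
    (hl1 : 0 < l1) (hl2 : 0 < l2) (hl3 : 0 < l3) (hl4 : 0 < l4)
    (hm1 : 0 < m1) (hm2 : 0 < m2) (hm3 : 0 < m3) (hm4 : 0 < m4)
    (A B C D Ab Bb Cb Db : ℝ → ℝ)
    (hApos : ∀ t ∈ Set.Ici (0:ℝ), 0 < A t) (hBpos : ∀ t ∈ Set.Ici (0:ℝ), 0 < B t)
    (hCpos : ∀ t ∈ Set.Ici (0:ℝ), 0 < C t) (hDpos : ∀ t ∈ Set.Ici (0:ℝ), 0 < D t)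
    (hAbpos : ∀ t ∈ Set.Ici (0:ℝ), 0 < Ab t) (hBbpos : ∀ t ∈ Set.Ici (0:ℝ), 0 < Bb t)
    (hCbpos : ∀ t ∈ Set.Ici (0:ℝ), 0 < Cb t) (hDbpos : ∀ t ∈ Set.Ici (0:ℝ), 0 < Db t)
    (hA : ∀ t ∈ Set.Ici (0:ℝ),
      HasDerivWithinAt A (C t / B t + B t / C t - 2) (Set.Ici 0) t)
    (hB : ∀ t ∈ Set.Ici (0:ℝ),
      HasDerivWithinAt B (-(B t) ^ 2 / (A t * C t) + C t / A t + D t / C t) (Set.Ici 0) t)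
    (hC : ∀ t ∈ Set.Ici (0:ℝ),
      HasDerivWithinAt C (-(C t) ^ 2 / (A t * B t) + B t / A t + D t / B t) (Set.Ici 0) t)
    (hD : ∀ t ∈ Set.Ici (0:ℝ),
      HasDerivWithinAt D (-(D t) ^ 2 / (B t * C t)) (Set.Ici 0) t)
    (hA0 : A 0 = l1) (hB0 : B 0 = l2) (hC0 : C 0 = l3) (hD0 : D 0 = l4)
    (hBlim : Filter.Tendsto B Filter.atTop Filter.atTop)
    (hBClim : Filter.Tendsto (fun t => B t / C t) Filter.atTop (nhds 1))
    (hAb : ∀ t ∈ Set.Ici (0:ℝ),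
      HasDerivWithinAt Ab (Cb t / Bb t + Bb t / Cb t - 2) (Set.Ici 0) t)
    (hBb : ∀ t ∈ Set.Ici (0:ℝ),
      HasDerivWithinAt Bb (-(Bb t) ^ 2 / (Ab t * Cb t) + Cb t / Ab t + Db t / Cb t) (Set.Ici 0) t)
    (hCb : ∀ t ∈ Set.Ici (0:ℝ),
      HasDerivWithinAt Cb (-(Cb t) ^ 2 / (Ab t * Bb t) + Bb t / Ab t + Db t / Bb t) (Set.Ici 0) t)
    (hDb : ∀ t ∈ Set.Ici (0:ℝ),
      HasDerivWithinAt Db (-(Db t) ^ 2 / (Bb t * Cb t)) (Set.Ici 0) t)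
    (hAb0 : Ab 0 = m1) (hBb0 : Bb 0 = m2) (hCb0 : Cb 0 = m3) (hDb0 : Db 0 = m4)
    (hBblim : Filter.Tendsto Bb Filter.atTop Filter.atTop)
    (hBbClim : Filter.Tendsto (fun t => Bb t / Cb t) Filter.atTop (nhds 1)) :
    Filter.Tendsto (fun t : ℝ =>
        ((A t - Ab t - a ^ 2 * Bb t - b ^ 2 * Cb t - c ^ 2 * Db t) / A t) ^ 2 +
        ((B t - Bb t - a ^ 2 * Db t) / B t) ^ 2 +
        ((C t - Cb t - b ^ 2 * Db t) / C t) ^ 2 +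
        ((D t - Db t) / D t) ^ 2 +
        2 * (a * Bb t + a * c * Db t) ^ 2 / (A t * B t) +
        2 * (b * Cb t + b * c * Db t) ^ 2 / (A t * C t) +
        2 * (c * Db t) ^ 2 / (A t * D t) +
        2 * (a * b * Db t) ^ 2 / (B t * C t) +
        2 * (a * Db t) ^ 2 / (B t * D t) +
        2 * (b * Db t) ^ 2 / (C t * D t))
      Filter.atTop (nhds 0) ↔
      (a = 0 ∧ b = 0 ∧ m2 * m3 * m4 ^ 2 = l2 * l3 * l4 ^ 2 ∧
       m1 * m4 * (m2 + m3) = l1 * l4 * (l2 + l3)) := by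
  obtain ⟨hK, hL, hDf, hAge⟩ := solFacts l1 l2 l3 l4 hl1 hl2 hl3 hl4 A B C D
    hApos hBpos hCpos hDpos hA hB hC hD hA0 hB0 hC0 hD0
  obtain ⟨hKb, hLb, hDbf, hAbge⟩ := solFacts m1 m2 m3 m4 hm1 hm2 hm3 hm4 Ab Bb Cb Db
    hAbpos hBbpos hCbpos hDbpos hAb hBb hCb hDb hAb0 hBb0 hCb0 hDb0
  have ev0 : ∀ᶠ t : ℝ in atTop, (0:ℝ) ≤ t := eventually_ge_atTop 0
  have hKpos : (0:ℝ) < l2 * l3 * l4 ^ 2 := by positivity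
  have hKbpos : (0:ℝ) < m2 * m3 * m4 ^ 2 := by positivity
  have hLpos : (0:ℝ) < l1 * l4 * (l2 + l3) := by positivity
  have hLbpos : (0:ℝ) < m1 * m4 * (m2 + m3) := by positivity
  -- C and Cb tend to infinity
  have hCBlim : Tendsto (fun t => C t / B t) atTop (nhds 1) := by
    have h := hBClim.inv₀ one_ne_zero
    simp only [inv_one] at h
    exact h.congr fun t => by rw [← inv_div (B t) (C t)]
  have hCbBblim : Tendsto (fun t => Cb t / Bb t) atTop (nhds 1) := by
    have h := hBbClim.inv₀ one_ne_zero
    simp only [inv_one] at h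
    exact h.congr fun t => by rw [← inv_div (Bb t) (Cb t)]
  have hClim : Tendsto C atTop atTop := by
    have h := Filter.Tendsto.atTop_mul_pos one_pos hBlim hCBlim
    refine h.congr' ?_
    filter_upwards [ev0] with t ht
    rw [mul_comm, div_mul_cancel₀ _ (hBpos t ht).ne']
  have hCblim : Tendsto Cb atTop atTop := by
    have h := Filter.Tendsto.atTop_mul_pos one_pos hBblim hCbBblim
    refine h.congr' ?_
    filter_upwards [ev0] with t ht
    rw [mul_comm, div_mul_cancel₀ _ (hBbpos t ht).ne']
  -- D and Db tend to 0
  have hDinvTop : Tendsto (fun t => (D t)⁻¹) atTop atTop := by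
    apply cubeTop
    · filter_upwards [ev0] with t ht
      exact inv_nonneg.2 (hDpos t ht).le
    · have haff : Tendsto (fun t : ℝ => l4⁻¹ ^ 3 + 3 / (l2 * l3 * l4 ^ 2) * t) atTop atTop :=
        tendsto_atTop_add_const_left _ _ (Tendsto.const_mul_atTop (by positivity) tendsto_id)
      refine haff.congr' ?_
      filter_upwards [ev0] with t ht
      exact (hDf t ht).symm
  have hDlim : Tendsto D atTop (nhds 0) := by
    have h := hDinvTop.inv_tendsto_atTop
    exact h.congr fun t => by simp
  have hDbinvTop : Tendsto (fun t => (Db t)⁻¹) atTop atTop := by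
    apply cubeTop
    · filter_upwards [ev0] with t ht
      exact inv_nonneg.2 (hDbpos t ht).le
    · have haff : Tendsto (fun t : ℝ => m4⁻¹ ^ 3 + 3 / (m2 * m3 * m4 ^ 2) * t) atTop atTop :=
        tendsto_atTop_add_const_left _ _ (Tendsto.const_mul_atTop (by positivity) tendsto_id)
      refine haff.congr' ?_
      filter_upwards [ev0] with t ht
      exact (hDbf t ht).symm
  have hDblim : Tendsto Db atTop (nhds 0) := by
    have h := hDbinvTop.inv_tendsto_atTop
    exact h.congr fun t => by simp
  -- Db is bounded above by m4
  have hDble : ∀ t ∈ Ici (0:ℝ), Db t ≤ m4 := by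
    intro t ht
    have ht' : (0:ℝ) ≤ t := ht
    have h1 : m4⁻¹ ^ 3 ≤ (Db t)⁻¹ ^ 3 := by
      rw [hDbf t ht]
      have : 0 ≤ 3 / (m2 * m3 * m4 ^ 2) * t := by positivity
      linarith
    have h2 : m4⁻¹ ≤ (Db t)⁻¹ := by
      by_contra hlt
      push_neg at hlt
      have := pow_lt_pow_left₀ hlt (inv_nonneg.2 (hDbpos t ht).le) (by norm_num : (3:ℕ) ≠ 0)
      linarith
    have h3 : m4 * Db t * m4⁻¹ ≤ m4 * Db t * (Db t)⁻¹ :=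
      mul_le_mul_of_nonneg_left h2 (mul_pos hm4 (hDbpos t ht)).le
    have e1 : m4 * Db t * m4⁻¹ = Db t := by
      field_simp
    have e2 : m4 * Db t * (Db t)⁻¹ = m4 := by
      field_simp [(hDbpos t ht).ne']
    linarith
  -- A is bounded above
  have hAle : ∀ t ∈ Ici (0:ℝ),
      A t ≤ Real.sqrt ((l1 * l4 * (l2 + l3)) ^ 2 / (4 * (l2 * l3 * l4 ^ 2))) := by
    intro t ht
    have h1 := hK t ht
    have h2 := hL t ht
    have hsq : A t ^ 2 ≤ (l1 * l4 * (l2 + l3)) ^ 2 / (4 * (l2 * l3 * l4 ^ 2)) := by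
      rw [le_div_iff₀ (by positivity)]
      nlinarith [sq_nonneg (A t * D t * (B t - C t)), sq_nonneg (A t), h1, h2,
        (hApos t ht), (hBpos t ht), (hCpos t ht), (hDpos t ht)]
    calc A t = Real.sqrt (A t ^ 2) := (Real.sqrt_sq (hApos t ht).le).symm
    _ ≤ _ := Real.sqrt_le_sqrt hsq
  have hMpos : (0:ℝ) < Real.sqrt ((l1 * l4 * (l2 + l3)) ^ 2 / (4 * (l2 * l3 * l4 ^ 2))) :=
    Real.sqrt_pos.2 (by positivity)
  -- cube of the ratio Db/D
  have hcube : Tendsto (fun t => (Db t / D t) ^ 3) atTop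
      (nhds ((m2 * m3 * m4 ^ 2) / (l2 * l3 * l4 ^ 2))) := by
    have h := tendsto_ratio_affine (l4⁻¹ ^ 3) (3 / (l2 * l3 * l4 ^ 2))
      (m4⁻¹ ^ 3) (3 / (m2 * m3 * m4 ^ 2)) (by positivity)
    have hval : 3 / (l2 * l3 * l4 ^ 2) / (3 / (m2 * m3 * m4 ^ 2)) =
        (m2 * m3 * m4 ^ 2) / (l2 * l3 * l4 ^ 2) := by
      rw [div_div_div_eq]
      rw [div_eq_div_iff (by positivity) (by positivity)]
      ring
    rw [hval] at h
    refine h.congr' ?_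
    filter_upwards [ev0] with t ht
    rw [← hDf t ht, ← hDbf t ht]
    have hDne := (hDpos t ht).ne'
    have hDbne := (hDbpos t ht).ne'
    field_simp
  -- limits of B/C + 2 + C/B
  have hX : Tendsto (fun t => B t / C t + 2 + C t / B t) atTop (nhds 4) := by
    have h := (hBClim.add_const 2).add hCBlim
    norm_num at h
    exact h
  have hXb : Tendsto (fun t => Bb t / Cb t + 2 + Cb t / Bb t) atTop (nhds 4) := by
    have h := (hBbClim.add_const 2).add hCbBblim
    norm_num at h
    exact h
  -- pointwise identity for A in terms of conserved quantities
  have haux : ∀ t ∈ Ici (0:ℝ),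
      (l2 * l3 * l4 ^ 2) * (B t / C t + 2 + C t / B t) =
        (l1 * l4 * (l2 + l3)) ^ 2 / (A t) ^ 2 := by
    intro t ht
    have h1 := hK t ht
    have h2 := hL t ht
    have hAne := (hApos t ht).ne'
    have hBne := (hBpos t ht).ne'
    have hCne := (hCpos t ht).ne'
    rw [eq_div_iff (pow_ne_zero 2 hAne)]
    rw [← h1, ← h2]
    field_simp
    ring
  have hauxb : ∀ t ∈ Ici (0:ℝ),
      (m2 * m3 * m4 ^ 2) * (Bb t / Cb t + 2 + Cb t / Bb t) =
        (m1 * m4 * (m2 + m3)) ^ 2 / (Ab t) ^ 2 := by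
    intro t ht
    have h1 := hKb t ht
    have h2 := hLb t ht
    have hAne := (hAbpos t ht).ne'
    have hBne := (hBbpos t ht).ne'
    have hCne := (hCbpos t ht).ne'
    rw [eq_div_iff (pow_ne_zero 2 hAne)]
    rw [← h1, ← h2]
    field_simp
    ring
  -- limit of (Ab/A)^2
  have hAsq : Tendsto (fun t => (Ab t / A t) ^ 2) atTop
      (nhds ((m1 * m4 * (m2 + m3)) ^ 2 / (l1 * l4 * (l2 + l3)) ^ 2 *
        ((l2 * l3 * l4 ^ 2) / (m2 * m3 * m4 ^ 2)))) := by
    have hnum : Tendsto (fun t => (l2 * l3 * l4 ^ 2) * (B t / C t + 2 + C t / B t))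
        atTop (nhds ((l2 * l3 * l4 ^ 2) * 4)) := hX.const_mul _
    have hden : Tendsto (fun t => (m2 * m3 * m4 ^ 2) * (Bb t / Cb t + 2 + Cb t / Bb t))
        atTop (nhds ((m2 * m3 * m4 ^ 2) * 4)) := hXb.const_mul _
    have h := (hnum.div hden (by positivity)).const_mul
      ((m1 * m4 * (m2 + m3)) ^ 2 / (l1 * l4 * (l2 + l3)) ^ 2)
    have hval : (m1 * m4 * (m2 + m3)) ^ 2 / (l1 * l4 * (l2 + l3)) ^ 2 *
        ((l2 * l3 * l4 ^ 2) * 4 / ((m2 * m3 * m4 ^ 2) * 4)) =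
        (m1 * m4 * (m2 + m3)) ^ 2 / (l1 * l4 * (l2 + l3)) ^ 2 *
        ((l2 * l3 * l4 ^ 2) / (m2 * m3 * m4 ^ 2)) := by
      rw [mul_div_mul_right _ _ (by norm_num : (4:ℝ) ≠ 0)]
    rw [hval] at h
    refine h.congr' ?_
    filter_upwards [ev0] with t ht
    simp only [Pi.div_apply]
    rw [haux t ht, hauxb t ht]
    have hAne := (hApos t ht).ne'
    have hAbne := (hAbpos t ht).ne'
    field_simp
  -- small ratios tend to zero
  have hDbl1 : Tendsto (fun t => Db t / l1) atTop (nhds 0) := by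
    simpa using hDblim.div_const l1
  have hDl1 : Tendsto (fun t => D t / l1) atTop (nhds 0) := by
    simpa using hDlim.div_const l1
  have hDbA : Tendsto (fun t => Db t / A t) atTop (nhds 0) := by
    refine squeeze_zero' ?_ ?_ hDbl1
    · filter_upwards [ev0] with t ht
      exact div_nonneg (hDbpos t ht).le (hApos t ht).le
    · filter_upwards [ev0] with t ht
      have h1 : (0:ℝ) ≤ Db t := (hDbpos t ht).le
      have h2 : l1 ≤ A t := hAge t ht
      gcongr
  have hDA : Tendsto (fun t => D t / A t) atTop (nhds 0) := by
    refine squeeze_zero' ?_ ?_ hDl1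
    · filter_upwards [ev0] with t ht
      exact div_nonneg (hDpos t ht).le (hApos t ht).le
    · filter_upwards [ev0] with t ht
      have h1 : (0:ℝ) ≤ D t := (hDpos t ht).le
      have h2 : l1 ≤ A t := hAge t ht
      gcongr
  have hDbB : Tendsto (fun t => Db t / B t) atTop (nhds 0) := by
    have hm4B : Tendsto (fun t => m4 * (B t)⁻¹) atTop (nhds 0) := by
      simpa using hBlim.inv_tendsto_atTop.const_mul m4
    refine squeeze_zero' ?_ ?_ hm4B
    · filter_upwards [ev0] with t ht
      exact div_nonneg (hDbpos t ht).le (hBpos t ht).le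
    · filter_upwards [ev0] with t ht
      rw [← div_eq_mul_inv]
      have h1 : Db t ≤ m4 := hDble t ht
      have h2 : (0:ℝ) < B t := hBpos t ht
      gcongr
  have hDbC : Tendsto (fun t => Db t / C t) atTop (nhds 0) := by
    have hm4C : Tendsto (fun t => m4 * (C t)⁻¹) atTop (nhds 0) := by
      simpa using hClim.inv_tendsto_atTop.const_mul m4
    refine squeeze_zero' ?_ ?_ hm4C
    · filter_upwards [ev0] with t ht
      exact div_nonneg (hDbpos t ht).le (hCpos t ht).le
    · filter_upwards [ev0] with t ht
      rw [← div_eq_mul_inv]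
      have h1 : Db t ≤ m4 := hDble t ht
      have h2 : (0:ℝ) < C t := hCpos t ht
      gcongr
  constructor
  · intro hS
    have hsq1 : Tendsto (fun t => ((A t - Ab t - a ^ 2 * Bb t - b ^ 2 * Cb t - c ^ 2 * Db t) / A t) ^ 2) atTop (nhds 0) := by
      refine squeeze_zero' ?_ ?_ hS
      · filter_upwards [ev0] with t ht
        positivity
      · filter_upwards [ev0] with t ht
        show ((A t - Ab t - a ^ 2 * Bb t - b ^ 2 * Cb t - c ^ 2 * Db t) / A t) ^ 2 ≤ ((A t - Ab t - a ^ 2 * Bb t - b ^ 2 * Cb t - c ^ 2 * Db t) / A t) ^ 2 +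
            ((B t - Bb t - a ^ 2 * Db t) / B t) ^ 2 +
            ((C t - Cb t - b ^ 2 * Db t) / C t) ^ 2 +
            ((D t - Db t) / D t) ^ 2 +
            2 * (a * Bb t + a * c * Db t) ^ 2 / (A t * B t) +
            2 * (b * Cb t + b * c * Db t) ^ 2 / (A t * C t) +
            2 * (c * Db t) ^ 2 / (A t * D t) +
            2 * (a * b * Db t) ^ 2 / (B t * C t) +
            2 * (a * Db t) ^ 2 / (B t * D t) +
            2 * (b * Db t) ^ 2 / (C t * D t)
        have n2 : (0:ℝ) ≤ ((B t - Bb t - a ^ 2 * Db t) / B t) ^ 2 := sq_nonneg _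
        have n3 : (0:ℝ) ≤ ((C t - Cb t - b ^ 2 * Db t) / C t) ^ 2 := sq_nonneg _
        have n4 : (0:ℝ) ≤ ((D t - Db t) / D t) ^ 2 := sq_nonneg _
        have n5 : (0:ℝ) ≤ 2 * (a * Bb t + a * c * Db t) ^ 2 / (A t * B t) := div_nonneg (by positivity) (mul_pos (hApos t ht) (hBpos t ht)).le
        have n6 : (0:ℝ) ≤ 2 * (b * Cb t + b * c * Db t) ^ 2 / (A t * C t) := div_nonneg (by positivity) (mul_pos (hApos t ht) (hCpos t ht)).le
        have n7 : (0:ℝ) ≤ 2 * (c * Db t) ^ 2 / (A t * D t) := div_nonneg (by positivity) (mul_pos (hApos t ht) (hDpos t ht)).le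
        have n8 : (0:ℝ) ≤ 2 * (a * b * Db t) ^ 2 / (B t * C t) := div_nonneg (by positivity) (mul_pos (hBpos t ht) (hCpos t ht)).le
        have n9 : (0:ℝ) ≤ 2 * (a * Db t) ^ 2 / (B t * D t) := div_nonneg (by positivity) (mul_pos (hBpos t ht) (hDpos t ht)).le
        have n10 : (0:ℝ) ≤ 2 * (b * Db t) ^ 2 / (C t * D t) := div_nonneg (by positivity) (mul_pos (hCpos t ht) (hDpos t ht)).le
        linarith
    have hsq2 : Tendsto (fun t => ((B t - Bb t - a ^ 2 * Db t) / B t) ^ 2) atTop (nhds 0) := by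
      refine squeeze_zero' ?_ ?_ hS
      · filter_upwards [ev0] with t ht
        positivity
      · filter_upwards [ev0] with t ht
        show ((B t - Bb t - a ^ 2 * Db t) / B t) ^ 2 ≤ ((A t - Ab t - a ^ 2 * Bb t - b ^ 2 * Cb t - c ^ 2 * Db t) / A t) ^ 2 +
            ((B t - Bb t - a ^ 2 * Db t) / B t) ^ 2 +
            ((C t - Cb t - b ^ 2 * Db t) / C t) ^ 2 +
            ((D t - Db t) / D t) ^ 2 +
            2 * (a * Bb t + a * c * Db t) ^ 2 / (A t * B t) +
            2 * (b * Cb t + b * c * Db t) ^ 2 / (A t * C t) +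
            2 * (c * Db t) ^ 2 / (A t * D t) +
            2 * (a * b * Db t) ^ 2 / (B t * C t) +
            2 * (a * Db t) ^ 2 / (B t * D t) +
            2 * (b * Db t) ^ 2 / (C t * D t)
        have n1 : (0:ℝ) ≤ ((A t - Ab t - a ^ 2 * Bb t - b ^ 2 * Cb t - c ^ 2 * Db t) / A t) ^ 2 := sq_nonneg _
        have n3 : (0:ℝ) ≤ ((C t - Cb t - b ^ 2 * Db t) / C t) ^ 2 := sq_nonneg _
        have n4 : (0:ℝ) ≤ ((D t - Db t) / D t) ^ 2 := sq_nonneg _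
        have n5 : (0:ℝ) ≤ 2 * (a * Bb t + a * c * Db t) ^ 2 / (A t * B t) := div_nonneg (by positivity) (mul_pos (hApos t ht) (hBpos t ht)).le
        have n6 : (0:ℝ) ≤ 2 * (b * Cb t + b * c * Db t) ^ 2 / (A t * C t) := div_nonneg (by positivity) (mul_pos (hApos t ht) (hCpos t ht)).le
        have n7 : (0:ℝ) ≤ 2 * (c * Db t) ^ 2 / (A t * D t) := div_nonneg (by positivity) (mul_pos (hApos t ht) (hDpos t ht)).le
        have n8 : (0:ℝ) ≤ 2 * (a * b * Db t) ^ 2 / (B t * C t) := div_nonneg (by positivity) (mul_pos (hBpos t ht) (hCpos t ht)).le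
        have n9 : (0:ℝ) ≤ 2 * (a * Db t) ^ 2 / (B t * D t) := div_nonneg (by positivity) (mul_pos (hBpos t ht) (hDpos t ht)).le
        have n10 : (0:ℝ) ≤ 2 * (b * Db t) ^ 2 / (C t * D t) := div_nonneg (by positivity) (mul_pos (hCpos t ht) (hDpos t ht)).le
        linarith
    have hsq3 : Tendsto (fun t => ((C t - Cb t - b ^ 2 * Db t) / C t) ^ 2) atTop (nhds 0) := by
      refine squeeze_zero' ?_ ?_ hS
      · filter_upwards [ev0] with t ht
        positivity
      · filter_upwards [ev0] with t ht
        show ((C t - Cb t - b ^ 2 * Db t) / C t) ^ 2 ≤ ((A t - Ab t - a ^ 2 * Bb t - b ^ 2 * Cb t - c ^ 2 * Db t) / A t) ^ 2 +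
            ((B t - Bb t - a ^ 2 * Db t) / B t) ^ 2 +
            ((C t - Cb t - b ^ 2 * Db t) / C t) ^ 2 +
            ((D t - Db t) / D t) ^ 2 +
            2 * (a * Bb t + a * c * Db t) ^ 2 / (A t * B t) +
            2 * (b * Cb t + b * c * Db t) ^ 2 / (A t * C t) +
            2 * (c * Db t) ^ 2 / (A t * D t) +
            2 * (a * b * Db t) ^ 2 / (B t * C t) +
            2 * (a * Db t) ^ 2 / (B t * D t) +
            2 * (b * Db t) ^ 2 / (C t * D t)
        have n1 : (0:ℝ) ≤ ((A t - Ab t - a ^ 2 * Bb t - b ^ 2 * Cb t - c ^ 2 * Db t) / A t) ^ 2 := sq_nonneg _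
        have n2 : (0:ℝ) ≤ ((B t - Bb t - a ^ 2 * Db t) / B t) ^ 2 := sq_nonneg _
        have n4 : (0:ℝ) ≤ ((D t - Db t) / D t) ^ 2 := sq_nonneg _
        have n5 : (0:ℝ) ≤ 2 * (a * Bb t + a * c * Db t) ^ 2 / (A t * B t) := div_nonneg (by positivity) (mul_pos (hApos t ht) (hBpos t ht)).le
        have n6 : (0:ℝ) ≤ 2 * (b * Cb t + b * c * Db t) ^ 2 / (A t * C t) := div_nonneg (by positivity) (mul_pos (hApos t ht) (hCpos t ht)).le
        have n7 : (0:ℝ) ≤ 2 * (c * Db t) ^ 2 / (A t * D t) := div_nonneg (by positivity) (mul_pos (hApos t ht) (hDpos t ht)).le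
        have n8 : (0:ℝ) ≤ 2 * (a * b * Db t) ^ 2 / (B t * C t) := div_nonneg (by positivity) (mul_pos (hBpos t ht) (hCpos t ht)).le
        have n9 : (0:ℝ) ≤ 2 * (a * Db t) ^ 2 / (B t * D t) := div_nonneg (by positivity) (mul_pos (hBpos t ht) (hDpos t ht)).le
        have n10 : (0:ℝ) ≤ 2 * (b * Db t) ^ 2 / (C t * D t) := div_nonneg (by positivity) (mul_pos (hCpos t ht) (hDpos t ht)).le
        linarith
    have hsq4 : Tendsto (fun t => ((D t - Db t) / D t) ^ 2) atTop (nhds 0) := by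
      refine squeeze_zero' ?_ ?_ hS
      · filter_upwards [ev0] with t ht
        positivity
      · filter_upwards [ev0] with t ht
        show ((D t - Db t) / D t) ^ 2 ≤ ((A t - Ab t - a ^ 2 * Bb t - b ^ 2 * Cb t - c ^ 2 * Db t) / A t) ^ 2 +
            ((B t - Bb t - a ^ 2 * Db t) / B t) ^ 2 +
            ((C t - Cb t - b ^ 2 * Db t) / C t) ^ 2 +
            ((D t - Db t) / D t) ^ 2 +
            2 * (a * Bb t + a * c * Db t) ^ 2 / (A t * B t) +
            2 * (b * Cb t + b * c * Db t) ^ 2 / (A t * C t) +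
            2 * (c * Db t) ^ 2 / (A t * D t) +
            2 * (a * b * Db t) ^ 2 / (B t * C t) +
            2 * (a * Db t) ^ 2 / (B t * D t) +
            2 * (b * Db t) ^ 2 / (C t * D t)
        have n1 : (0:ℝ) ≤ ((A t - Ab t - a ^ 2 * Bb t - b ^ 2 * Cb t - c ^ 2 * Db t) / A t) ^ 2 := sq_nonneg _
        have n2 : (0:ℝ) ≤ ((B t - Bb t - a ^ 2 * Db t) / B t) ^ 2 := sq_nonneg _
        have n3 : (0:ℝ) ≤ ((C t - Cb t - b ^ 2 * Db t) / C t) ^ 2 := sq_nonneg _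
        have n5 : (0:ℝ) ≤ 2 * (a * Bb t + a * c * Db t) ^ 2 / (A t * B t) := div_nonneg (by positivity) (mul_pos (hApos t ht) (hBpos t ht)).le
        have n6 : (0:ℝ) ≤ 2 * (b * Cb t + b * c * Db t) ^ 2 / (A t * C t) := div_nonneg (by positivity) (mul_pos (hApos t ht) (hCpos t ht)).le
        have n7 : (0:ℝ) ≤ 2 * (c * Db t) ^ 2 / (A t * D t) := div_nonneg (by positivity) (mul_pos (hApos t ht) (hDpos t ht)).le
        have n8 : (0:ℝ) ≤ 2 * (a * b * Db t) ^ 2 / (B t * C t) := div_nonneg (by positivity) (mul_pos (hBpos t ht) (hCpos t ht)).le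
        have n9 : (0:ℝ) ≤ 2 * (a * Db t) ^ 2 / (B t * D t) := div_nonneg (by positivity) (mul_pos (hBpos t ht) (hDpos t ht)).le
        have n10 : (0:ℝ) ≤ 2 * (b * Db t) ^ 2 / (C t * D t) := div_nonneg (by positivity) (mul_pos (hCpos t ht) (hDpos t ht)).le
        linarith
    have hsq5 : Tendsto (fun t => 2 * (a * Bb t + a * c * Db t) ^ 2 / (A t * B t)) atTop (nhds 0) := by
      refine squeeze_zero' ?_ ?_ hS
      · filter_upwards [ev0] with t ht
        exact div_nonneg (by positivity) (mul_pos (hApos t ht) (hBpos t ht)).le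
      · filter_upwards [ev0] with t ht
        show 2 * (a * Bb t + a * c * Db t) ^ 2 / (A t * B t) ≤ ((A t - Ab t - a ^ 2 * Bb t - b ^ 2 * Cb t - c ^ 2 * Db t) / A t) ^ 2 +
            ((B t - Bb t - a ^ 2 * Db t) / B t) ^ 2 +
            ((C t - Cb t - b ^ 2 * Db t) / C t) ^ 2 +
            ((D t - Db t) / D t) ^ 2 +
            2 * (a * Bb t + a * c * Db t) ^ 2 / (A t * B t) +
            2 * (b * Cb t + b * c * Db t) ^ 2 / (A t * C t) +
            2 * (c * Db t) ^ 2 / (A t * D t) +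
            2 * (a * b * Db t) ^ 2 / (B t * C t) +
            2 * (a * Db t) ^ 2 / (B t * D t) +
            2 * (b * Db t) ^ 2 / (C t * D t)
        have n1 : (0:ℝ) ≤ ((A t - Ab t - a ^ 2 * Bb t - b ^ 2 * Cb t - c ^ 2 * Db t) / A t) ^ 2 := sq_nonneg _
        have n2 : (0:ℝ) ≤ ((B t - Bb t - a ^ 2 * Db t) / B t) ^ 2 := sq_nonneg _
        have n3 : (0:ℝ) ≤ ((C t - Cb t - b ^ 2 * Db t) / C t) ^ 2 := sq_nonneg _
        have n4 : (0:ℝ) ≤ ((D t - Db t) / D t) ^ 2 := sq_nonneg _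
        have n6 : (0:ℝ) ≤ 2 * (b * Cb t + b * c * Db t) ^ 2 / (A t * C t) := div_nonneg (by positivity) (mul_pos (hApos t ht) (hCpos t ht)).le
        have n7 : (0:ℝ) ≤ 2 * (c * Db t) ^ 2 / (A t * D t) := div_nonneg (by positivity) (mul_pos (hApos t ht) (hDpos t ht)).le
        have n8 : (0:ℝ) ≤ 2 * (a * b * Db t) ^ 2 / (B t * C t) := div_nonneg (by positivity) (mul_pos (hBpos t ht) (hCpos t ht)).le
        have n9 : (0:ℝ) ≤ 2 * (a * Db t) ^ 2 / (B t * D t) := div_nonneg (by positivity) (mul_pos (hBpos t ht) (hDpos t ht)).le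
        have n10 : (0:ℝ) ≤ 2 * (b * Db t) ^ 2 / (C t * D t) := div_nonneg (by positivity) (mul_pos (hCpos t ht) (hDpos t ht)).le
        linarith
    have hsq6 : Tendsto (fun t => 2 * (b * Cb t + b * c * Db t) ^ 2 / (A t * C t)) atTop (nhds 0) := by
      refine squeeze_zero' ?_ ?_ hS
      · filter_upwards [ev0] with t ht
        exact div_nonneg (by positivity) (mul_pos (hApos t ht) (hCpos t ht)).le
      · filter_upwards [ev0] with t ht
        show 2 * (b * Cb t + b * c * Db t) ^ 2 / (A t * C t) ≤ ((A t - Ab t - a ^ 2 * Bb t - b ^ 2 * Cb t - c ^ 2 * Db t) / A t) ^ 2 +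
            ((B t - Bb t - a ^ 2 * Db t) / B t) ^ 2 +
            ((C t - Cb t - b ^ 2 * Db t) / C t) ^ 2 +
            ((D t - Db t) / D t) ^ 2 +
            2 * (a * Bb t + a * c * Db t) ^ 2 / (A t * B t) +
            2 * (b * Cb t + b * c * Db t) ^ 2 / (A t * C t) +
            2 * (c * Db t) ^ 2 / (A t * D t) +
            2 * (a * b * Db t) ^ 2 / (B t * C t) +
            2 * (a * Db t) ^ 2 / (B t * D t) +
            2 * (b * Db t) ^ 2 / (C t * D t)
        have n1 : (0:ℝ) ≤ ((A t - Ab t - a ^ 2 * Bb t - b ^ 2 * Cb t - c ^ 2 * Db t) / A t) ^ 2 := sq_nonneg _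
        have n2 : (0:ℝ) ≤ ((B t - Bb t - a ^ 2 * Db t) / B t) ^ 2 := sq_nonneg _
        have n3 : (0:ℝ) ≤ ((C t - Cb t - b ^ 2 * Db t) / C t) ^ 2 := sq_nonneg _
        have n4 : (0:ℝ) ≤ ((D t - Db t) / D t) ^ 2 := sq_nonneg _
        have n5 : (0:ℝ) ≤ 2 * (a * Bb t + a * c * Db t) ^ 2 / (A t * B t) := div_nonneg (by positivity) (mul_pos (hApos t ht) (hBpos t ht)).le
        have n7 : (0:ℝ) ≤ 2 * (c * Db t) ^ 2 / (A t * D t) := div_nonneg (by positivity) (mul_pos (hApos t ht) (hDpos t ht)).le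
        have n8 : (0:ℝ) ≤ 2 * (a * b * Db t) ^ 2 / (B t * C t) := div_nonneg (by positivity) (mul_pos (hBpos t ht) (hCpos t ht)).le
        have n9 : (0:ℝ) ≤ 2 * (a * Db t) ^ 2 / (B t * D t) := div_nonneg (by positivity) (mul_pos (hBpos t ht) (hDpos t ht)).le
        have n10 : (0:ℝ) ≤ 2 * (b * Db t) ^ 2 / (C t * D t) := div_nonneg (by positivity) (mul_pos (hCpos t ht) (hDpos t ht)).le
        linarith
    -- Db/D tends to 1, hence the conserved quantities of D agree
    have hDr : Tendsto (fun t => Db t / D t) atTop (nhds 1) := by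
      have h0 := sqz hsq4
      have h1 := (tendsto_const_nhds (x := (1:ℝ))).sub h0
      norm_num at h1
      refine h1.congr' ?_
      filter_upwards [ev0] with t ht
      have hDne := (hDpos t ht).ne'
      field_simp
      ring
    have hKeq : m2 * m3 * m4 ^ 2 = l2 * l3 * l4 ^ 2 := by
      have h1 : Tendsto (fun t => (Db t / D t) ^ 3) atTop (nhds 1) := by
        have h := hDr.pow 3
        norm_num at h
        exact h
      have h2 := tendsto_nhds_unique hcube h1
      field_simp at h2
      exact h2
    -- Bb/B and Cb/C tend to 1
    have hBr : Tendsto (fun t => Bb t / B t) atTop (nhds 1) := by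
      have h0 := sqz hsq2
      have h1 := ((tendsto_const_nhds (x := (1:ℝ))).sub (hDbB.const_mul (a ^ 2))).sub h0
      norm_num at h1
      refine h1.congr' ?_
      filter_upwards [ev0] with t ht
      have hBne := (hBpos t ht).ne'
      field_simp
      ring
    have hCr : Tendsto (fun t => Cb t / C t) atTop (nhds 1) := by
      have h0 := sqz hsq3
      have h1 := ((tendsto_const_nhds (x := (1:ℝ))).sub (hDbC.const_mul (b ^ 2))).sub h0
      norm_num at h1
      refine h1.congr' ?_
      filter_upwards [ev0] with t ht
      have hCne := (hCpos t ht).ne'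
      field_simp
      ring
    -- a = 0
    have ha : a = 0 := by
      by_contra ha
      have hBbc : Tendsto (fun t => Bb t / B t + c * (Db t / B t)) atTop (nhds 1) := by
        have h := hBr.add (hDbB.const_mul c)
        norm_num at h
        exact h
      have hBA : Tendsto (fun t => B t / A t) atTop atTop := by
        refine tendsto_atTop_mono' atTop ?_ (Filter.Tendsto.atTop_div_const hMpos hBlim)
        filter_upwards [ev0] with t ht
        have h1 : (0:ℝ) ≤ B t := (hBpos t ht).le
        have h2 : 0 < A t := hApos t ht
        have h3 := hAle t ht
        gcongr
      have ha2 : (0:ℝ) < 2 * a ^ 2 * 1 ^ 2 := by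
        have : (0:ℝ) < a ^ 2 := lt_of_le_of_ne (sq_nonneg a) (Ne.symm (pow_ne_zero 2 ha))
        nlinarith
      have hfac : Tendsto (fun t => 2 * a ^ 2 * (Bb t / B t + c * (Db t / B t)) ^ 2)
          atTop (nhds (2 * a ^ 2 * 1 ^ 2)) := (hBbc.pow 2).const_mul _
      have hT5top : Tendsto
          (fun t => 2 * a ^ 2 * (Bb t / B t + c * (Db t / B t)) ^ 2 * (B t / A t))
          atTop atTop := Filter.Tendsto.pos_mul_atTop ha2 hfac hBA
      have htop : Tendsto (fun t => 2 * (a * Bb t + a * c * Db t) ^ 2 / (A t * B t))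
          atTop atTop := by
        refine hT5top.congr' ?_
        filter_upwards [ev0] with t ht
        have hAne := (hApos t ht).ne'
        have hBne := (hBpos t ht).ne'
        field_simp
      exact not_tendsto_nhds_of_tendsto_atTop htop 0 hsq5
    -- b = 0
    have hb : b = 0 := by
      by_contra hb
      have hCbc : Tendsto (fun t => Cb t / C t + c * (Db t / C t)) atTop (nhds 1) := by
        have h := hCr.add (hDbC.const_mul c)
        norm_num at h
        exact h
      have hCA : Tendsto (fun t => C t / A t) atTop atTop := by
        refine tendsto_atTop_mono' atTop ?_ (Filter.Tendsto.atTop_div_const hMpos hClim)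
        filter_upwards [ev0] with t ht
        have h1 : (0:ℝ) ≤ C t := (hCpos t ht).le
        have h2 : 0 < A t := hApos t ht
        have h3 := hAle t ht
        gcongr
      have hb2 : (0:ℝ) < 2 * b ^ 2 * 1 ^ 2 := by
        have : (0:ℝ) < b ^ 2 := lt_of_le_of_ne (sq_nonneg b) (Ne.symm (pow_ne_zero 2 hb))
        nlinarith
      have hfac : Tendsto (fun t => 2 * b ^ 2 * (Cb t / C t + c * (Db t / C t)) ^ 2)
          atTop (nhds (2 * b ^ 2 * 1 ^ 2)) := (hCbc.pow 2).const_mul _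
      have hT6top : Tendsto
          (fun t => 2 * b ^ 2 * (Cb t / C t + c * (Db t / C t)) ^ 2 * (C t / A t))
          atTop atTop := Filter.Tendsto.pos_mul_atTop hb2 hfac hCA
      have htop : Tendsto (fun t => 2 * (b * Cb t + b * c * Db t) ^ 2 / (A t * C t))
          atTop atTop := by
        refine hT6top.congr' ?_
        filter_upwards [ev0] with t ht
        have hAne := (hApos t ht).ne'
        have hCne := (hCpos t ht).ne'
        field_simp
      exact not_tendsto_nhds_of_tendsto_atTop htop 0 hsq6
    subst ha
    subst hb
    -- Ab/A tends to 1, hence the conserved quantities of A agree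
    have hAr : Tendsto (fun t => Ab t / A t) atTop (nhds 1) := by
      have h0 := sqz hsq1
      have h1 := ((tendsto_const_nhds (x := (1:ℝ))).sub (hDbA.const_mul (c ^ 2))).sub h0
      norm_num at h1
      refine h1.congr' ?_
      filter_upwards [ev0] with t ht
      have hAne := (hApos t ht).ne'
      field_simp
      ring
    have hLeq : m1 * m4 * (m2 + m3) = l1 * l4 * (l2 + l3) := by
      have h1 : Tendsto (fun t => (Ab t / A t) ^ 2) atTop (nhds 1) := by
        have h := hAr.pow 2
        norm_num at h
        exact h
      have h2 := tendsto_nhds_unique hAsq h1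
      rw [hKeq, div_self hKpos.ne', mul_one] at h2
      field_simp at h2
      exact (pow_left_inj₀ (by positivity) (by positivity) two_ne_zero).1 (by linear_combination h2)
    exact ⟨rfl, rfl, hKeq, hLeq⟩
  · rintro ⟨rfl, rfl, hKeq, hLeq⟩
    -- Db/D tends to 1
    have hDr : Tendsto (fun t => Db t / D t) atTop (nhds 1) := by
      refine tendsto_one_of_pow 3 (by norm_num) ?_ ?_
      · filter_upwards [ev0] with t ht
        exact div_nonneg (hDbpos t ht).le (hDpos t ht).le
      · have h := hcube
        rw [hKeq, div_self hKpos.ne'] at h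
        exact h
    have hDrI : Tendsto (fun t => D t / Db t) atTop (nhds 1) := by
      have h := hDr.inv₀ one_ne_zero
      simp only [inv_one] at h
      exact h.congr fun t => by rw [← inv_div (Db t) (D t)]
    -- Bb*Cb/(B*C) tends to 1
    have hBC1 : Tendsto (fun t => (Bb t * Cb t) / (B t * C t)) atTop (nhds 1) := by
      have h : Tendsto (fun t => (m2 * m3 * m4 ^ 2) / (l2 * l3 * l4 ^ 2) * (D t / Db t) ^ 2)
          atTop (nhds ((m2 * m3 * m4 ^ 2) / (l2 * l3 * l4 ^ 2) * 1 ^ 2)) :=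
        (hDrI.pow 2).const_mul _
      have hone : (m2 * m3 * m4 ^ 2) / (l2 * l3 * l4 ^ 2) * (1:ℝ) ^ 2 = 1 := by
        rw [hKeq, one_pow, mul_one, div_self hKpos.ne']
      rw [hone] at h
      refine h.congr' ?_
      filter_upwards [ev0] with t ht
      have h1 := hK t ht
      have h2 := hKb t ht
      have hDne := (hDpos t ht).ne'
      have hDbne := (hDbpos t ht).ne'
      have hBne := (hBpos t ht).ne'
      have hCne := (hCpos t ht).ne'
      field_simp
      linear_combination (Bb t * Cb t * Db t ^ 2) * h1 - (D t ^ 2 * B t * C t) * h2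
    -- Bb/B tends to 1
    have hBr : Tendsto (fun t => Bb t / B t) atTop (nhds 1) := by
      refine tendsto_one_of_pow 2 (by norm_num) ?_ ?_
      · filter_upwards [ev0] with t ht
        exact div_nonneg (hBbpos t ht).le (hBpos t ht).le
      · have h := ((hBbClim.div hBClim one_ne_zero).mul hBC1)
        simp only [one_div, inv_one, mul_one, one_mul, div_one] at h
        refine h.congr' ?_
        filter_upwards [ev0] with t ht
        have hBne := (hBpos t ht).ne'
        have hCne := (hCpos t ht).ne'
        have hBbne := (hBbpos t ht).ne'
        have hCbne := (hCbpos t ht).ne'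
        simp only [Pi.div_apply]
        field_simp
    -- Cb/C tends to 1
    have hCr : Tendsto (fun t => Cb t / C t) atTop (nhds 1) := by
      refine tendsto_one_of_pow 2 (by norm_num) ?_ ?_
      · filter_upwards [ev0] with t ht
        exact div_nonneg (hCbpos t ht).le (hCpos t ht).le
      · have h := ((hCbBblim.div hCBlim one_ne_zero).mul hBC1)
        simp only [one_div, inv_one, mul_one, one_mul, div_one] at h
        refine h.congr' ?_
        filter_upwards [ev0] with t ht
        have hBne := (hBpos t ht).ne'
        have hCne := (hCpos t ht).ne'
        have hBbne := (hBbpos t ht).ne'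
        have hCbne := (hCbpos t ht).ne'
        simp only [Pi.div_apply]
        field_simp
    -- Ab/A tends to 1
    have hAr : Tendsto (fun t => Ab t / A t) atTop (nhds 1) := by
      refine tendsto_one_of_pow 2 (by norm_num) ?_ ?_
      · filter_upwards [ev0] with t ht
        exact div_nonneg (hAbpos t ht).le (hApos t ht).le
      · have h := hAsq
        rw [hKeq, hLeq, div_self (pow_ne_zero 2 hLpos.ne'), one_mul,
          div_self hKpos.ne'] at h
        exact h
    -- assemble
    have t1 : Tendsto (fun t => (1 - Ab t / A t - c ^ 2 * (Db t / A t)) ^ 2) atTop (nhds 0) := by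
      have h := (((tendsto_const_nhds (x := (1:ℝ))).sub hAr).sub (hDbA.const_mul (c ^ 2))).pow 2
      norm_num at h
      exact h
    have t2 : Tendsto (fun t => (1 - Bb t / B t) ^ 2) atTop (nhds 0) := by
      have h := ((tendsto_const_nhds (x := (1:ℝ))).sub hBr).pow 2
      norm_num at h
      exact h
    have t3 : Tendsto (fun t => (1 - Cb t / C t) ^ 2) atTop (nhds 0) := by
      have h := ((tendsto_const_nhds (x := (1:ℝ))).sub hCr).pow 2
      norm_num at h
      exact h
    have t4 : Tendsto (fun t => (1 - Db t / D t) ^ 2) atTop (nhds 0) := by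
      have h := ((tendsto_const_nhds (x := (1:ℝ))).sub hDr).pow 2
      norm_num at h
      exact h
    have t7 : Tendsto (fun t => 2 * c ^ 2 * ((Db t / D t) ^ 2 * (D t / A t))) atTop (nhds 0) := by
      have h := ((hDr.pow 2).mul hDA).const_mul (2 * c ^ 2)
      norm_num at h
      exact h
    have hsum := (((t1.add t2).add t3).add t4).add t7
    norm_num at hsum
    refine hsum.congr' ?_
    filter_upwards [ev0] with t ht
    have hAne := (hApos t ht).ne'
    have hBne := (hBpos t ht).ne'
    have hCne := (hCpos t ht).ne'
    have hDne := (hDpos t ht).ne'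
    field_simp
    ring
end

section
/- Let a₃ ≠ 0 be real and let λ₁,λ₃,λ₄ and λ̄₁,λ̄₃,λ̄₄ be positive reals. Suppose A,C,D : [0,∞) → (0,∞) are differentiable and satisfy dA/dt = C/A + 2, dC/dt = -C²/A², dD/dt = 4a₃² with A(0)=λ₁, C(0)=λ₃, D(0)=λ₄, and suppose (as holds for these solutions) that C(t) converges to a positive limit c as t → ∞. Let Ā,C̄,D̄ satisfy the same ODE system with initial data λ̄₁,λ̄₃,λ̄₄ and C̄(t) → c̄ > 0. Then 2((A-Ā)/A)² + ((C-C̄)/C)² + ((D-D̄)/D)² tends to 0 as t → ∞ if and only if c̄ = c; in particular λ̄₁ and λ̄₄ may be chosen arbitrarily (with λ̄₃ then constrained only by the limit condition), so the quasi-convergence class [g]_α is exactly a 2-parameter family. -/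
open Filter Set Real

/-- Monotonicity on `Ici 0` from a nonnegative derivative. -/
lemma stmt15_mono {f f' : ℝ → ℝ}
    (hf : ∀ t ∈ Set.Ici (0:ℝ), HasDerivWithinAt f (f' t) (Set.Ici 0) t)
    (h0 : ∀ t ∈ Set.Ici (0:ℝ), 0 ≤ f' t) : MonotoneOn f (Set.Ici 0) := by
  refine monotoneOn_of_hasDerivWithinAt_nonneg (f' := f') (convex_Ici 0)
    (fun t ht => (hf t ht).continuousWithinAt) (fun x hx => ?_) (fun x hx => ?_)
  · rw [interior_Ici] at hx ⊢
    exact (hf x (Set.Ioi_subset_Ici_self hx)).mono Set.Ioi_subset_Ici_self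
  · rw [interior_Ici] at hx
    exact h0 x (Set.Ioi_subset_Ici_self hx)

lemma stmt15_anti {f f' : ℝ → ℝ}
    (hf : ∀ t ∈ Set.Ici (0:ℝ), HasDerivWithinAt f (f' t) (Set.Ici 0) t)
    (h0 : ∀ t ∈ Set.Ici (0:ℝ), f' t ≤ 0) : AntitoneOn f (Set.Ici 0) := by
  refine antitoneOn_of_hasDerivWithinAt_nonpos (f' := f') (convex_Ici 0)
    (fun t ht => (hf t ht).continuousWithinAt) (fun x hx => ?_) (fun x hx => ?_)
  · rw [interior_Ici] at hx ⊢
    exact (hf x (Set.Ioi_subset_Ici_self hx)).mono Set.Ioi_subset_Ici_self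
  · rw [interior_Ici] at hx
    exact h0 x (Set.Ioi_subset_Ici_self hx)

/-- Solutions of `D' = 4a₃²` are affine. -/
lemma stmt15_lin (a3 l4 : ℝ) (D : ℝ → ℝ)
    (hD : ∀ t ∈ Set.Ici (0:ℝ), HasDerivWithinAt D (4 * a3 ^ 2) (Set.Ici 0) t)
    (hD0 : D 0 = l4) : ∀ t ∈ Set.Ici (0:ℝ), D t = l4 + 4 * a3 ^ 2 * t := by
  have hf : ∀ t ∈ Set.Ici (0:ℝ),
      HasDerivWithinAt (fun t => D t - 4 * a3 ^ 2 * t) 0 (Set.Ici 0) t := by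
    intro t ht
    have h2 : HasDerivWithinAt (fun t : ℝ => 4 * a3 ^ 2 * t) (4 * a3 ^ 2) (Set.Ici 0) t := by
      simpa using (hasDerivWithinAt_id t (Set.Ici 0)).const_mul (4 * a3 ^ 2)
    exact ((hD t ht).sub h2).congr_deriv (by ring)
  have hm := stmt15_mono hf (fun t _ => le_refl 0)
  have ha := stmt15_anti hf (fun t _ => le_refl 0)
  intro t ht
  have h1 := hm (Set.self_mem_Ici) ht ht
  have h2 := ha (Set.self_mem_Ici) ht ht
  have : D t - 4 * a3 ^ 2 * t = D 0 - 4 * a3 ^ 2 * 0 := le_antisymm h2 h1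
  rw [hD0] at this
  linarith

/-- A priori bounds for the `A`-component. -/
lemma stmt15_bounds (l1 l3 : ℝ) (hl1 : 0 < l1) (hl3 : 0 < l3) (A C : ℝ → ℝ)
    (hApos : ∀ t ∈ Set.Ici (0:ℝ), 0 < A t)
    (hCpos : ∀ t ∈ Set.Ici (0:ℝ), 0 < C t)
    (hA : ∀ t ∈ Set.Ici (0:ℝ), HasDerivWithinAt A (C t / A t + 2) (Set.Ici 0) t)
    (hC : ∀ t ∈ Set.Ici (0:ℝ), HasDerivWithinAt C (-(C t) ^ 2 / (A t) ^ 2) (Set.Ici 0) t)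
    (hA0 : A 0 = l1) (hC0 : C 0 = l3) :
    ∀ t ∈ Set.Ici (0:ℝ),
      l1 + 2 * t ≤ A t ∧ A t ≤ l1 + 2 * t + (l3 / 2) * Real.log (1 + 2 * t / l1) := by
  -- C is antitone, hence bounded by l3
  have hCanti := stmt15_anti hC (fun t ht =>
    div_nonpos_of_nonpos_of_nonneg (neg_nonpos.mpr (sq_nonneg _)) (sq_nonneg _))
  have hCle : ∀ t ∈ Set.Ici (0:ℝ), C t ≤ l3 := by
    intro t ht
    have := hCanti Set.self_mem_Ici ht ht
    rwa [hC0] at this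
  -- lower bound for A
  have hlow : ∀ t ∈ Set.Ici (0:ℝ), l1 + 2 * t ≤ A t := by
    have hf : ∀ t ∈ Set.Ici (0:ℝ),
        HasDerivWithinAt (fun t => A t - (l1 + 2 * t)) (C t / A t) (Set.Ici 0) t := by
      intro t ht
      have h2 : HasDerivWithinAt (fun t : ℝ => l1 + 2 * t) 2 (Set.Ici 0) t := by
        simpa using ((hasDerivWithinAt_id t (Set.Ici 0)).const_mul 2).const_add l1
      have := (hA t ht).sub h2
      exact this.congr_deriv (by ring)
    have hm := stmt15_mono hf (fun t ht =>
      le_of_lt (div_pos (hCpos t ht) (hApos t ht)))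
    intro t ht
    have := hm Set.self_mem_Ici ht ht
    simp only [hA0] at this
    linarith
  refine fun t ht => ⟨hlow t ht, ?_⟩
  -- upper bound for A
  have hf : ∀ s ∈ Set.Ici (0:ℝ),
      HasDerivWithinAt (fun s => l1 + 2 * s + (l3 / 2) * Real.log (1 + 2 * s / l1) - A s)
        (2 + (l3 / 2) * ((2 / l1) / (1 + 2 * s / l1)) - (C s / A s + 2)) (Set.Ici 0) s := by
    intro s hs
    have h1 : HasDerivWithinAt (fun s : ℝ => l1 + 2 * s) 2 (Set.Ici 0) s := by
      simpa using ((hasDerivWithinAt_id s (Set.Ici 0)).const_mul 2).const_add l1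
    have hs0 : (0:ℝ) ≤ s := hs
    have hu : HasDerivAt (fun s : ℝ => 1 + 2 * s / l1) (2 / l1) s := by
      simpa using (((hasDerivAt_id s).const_mul 2).div_const l1).const_add 1
    have hne : (1 : ℝ) + 2 * s / l1 ≠ 0 := by
      have : (0:ℝ) ≤ 2 * s / l1 := div_nonneg (by linarith) hl1.le
      linarith
    have h2 : HasDerivAt (fun s : ℝ => Real.log (1 + 2 * s / l1)) ((2 / l1) / (1 + 2 * s / l1)) s :=
      hu.log hne
    exact ((h1.add ((h2.hasDerivWithinAt).const_mul (l3 / 2))).sub (hA s hs))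
  have hnn : ∀ s ∈ Set.Ici (0:ℝ),
      0 ≤ 2 + (l3 / 2) * ((2 / l1) / (1 + 2 * s / l1)) - (C s / A s + 2) := by
    intro s hs
    have hs0 : (0:ℝ) ≤ s := hs
    have hden : (0:ℝ) < 1 + 2 * s / l1 := by
      have : (0:ℝ) ≤ 2 * s / l1 := div_nonneg (by linarith) hl1.le
      linarith
    have h12 : (0:ℝ) < l1 + 2 * s := by linarith
    have hkey : (l3 / 2) * ((2 / l1) / (1 + 2 * s / l1)) = l3 / (l1 + 2 * s) := by
      field_simp
    have hApos' := hApos s hs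
    have hAlow := hlow s hs
    have hCle' := hCle s hs
    have hCpos' := hCpos s hs
    have h1 : C s / A s ≤ l3 / (l1 + 2 * s) := by
      apply div_le_div₀ (le_of_lt hl3) hCle' h12 hAlow
    rw [hkey]
    linarith
  have hm := stmt15_mono hf hnn
  have := hm Set.self_mem_Ici ht ht
  simp only [hA0, mul_zero, zero_div, add_zero, Real.log_one] at this
  linarith

/-- log over linear tends to zero. -/
lemma stmt15_logdiv {p q : ℝ} (hp : 0 < p) :
    Filter.Tendsto (fun t => Real.log (1 + 2 * t / p) / (q + 2 * t))
      Filter.atTop (nhds 0) := by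
  have hlin : Filter.Tendsto (fun t : ℝ => p + 2 * t) Filter.atTop Filter.atTop := by
    apply Filter.tendsto_atTop_add_const_left
    exact Filter.Tendsto.const_mul_atTop two_pos Filter.tendsto_id
  have hlin2 : Filter.Tendsto (fun t : ℝ => q + 2 * t) Filter.atTop Filter.atTop := by
    apply Filter.tendsto_atTop_add_const_left
    exact Filter.Tendsto.const_mul_atTop two_pos Filter.tendsto_id
  have h2 : Filter.Tendsto (fun x : ℝ => Real.log x ^ 1 / (1 * x + (q - p)))
      Filter.atTop (nhds 0) :=
    Real.tendsto_pow_log_div_mul_add_atTop 1 (q - p) 1 one_ne_zero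
  have hA : Filter.Tendsto (fun t : ℝ => Real.log (p + 2 * t) / (q + 2 * t))
      Filter.atTop (nhds 0) := by
    have h3 := h2.comp hlin
    apply h3.congr
    intro t
    simp only [Function.comp_apply, pow_one]
    congr 1
    ring
  have hB : Filter.Tendsto (fun t : ℝ => Real.log p / (q + 2 * t))
      Filter.atTop (nhds 0) := Filter.Tendsto.div_atTop tendsto_const_nhds hlin2
  have := hA.sub hB
  rw [sub_zero] at this
  apply this.congr'
  filter_upwards [Filter.eventually_ge_atTop (0:ℝ)] with t ht
  have h1 : (0:ℝ) < p + 2 * t := by linarith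
  rw [show (1 + 2 * t / p) = (p + 2 * t) / p by field_simp,
    Real.log_div h1.ne' hp.ne', sub_div]

/-- class A9ii: for solutions of the reduced A9ii Ricci-flow ODE
system, quasi-convergence in the same frame holds iff the limits of `C` and `C̄`
agree; `[g]_α` is a 2-parameter family. -/
theorem stmt_15 (a3 : ℝ) (ha3 : a3 ≠ 0)
    (l1 l3 l4 m1 m3 m4 : ℝ)
    (hl1 : 0 < l1) (hl3 : 0 < l3) (hl4 : 0 < l4)
    (hm1 : 0 < m1) (hm3 : 0 < m3) (hm4 : 0 < m4)
    (A C D Ab Cb Db : ℝ → ℝ)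
    (hApos : ∀ t ∈ Set.Ici (0:ℝ), 0 < A t) (hCpos : ∀ t ∈ Set.Ici (0:ℝ), 0 < C t)
    (hDpos : ∀ t ∈ Set.Ici (0:ℝ), 0 < D t)
    (hAbpos : ∀ t ∈ Set.Ici (0:ℝ), 0 < Ab t) (hCbpos : ∀ t ∈ Set.Ici (0:ℝ), 0 < Cb t)
    (hDbpos : ∀ t ∈ Set.Ici (0:ℝ), 0 < Db t)
    (hA : ∀ t ∈ Set.Ici (0:ℝ), HasDerivWithinAt A (C t / A t + 2) (Set.Ici 0) t)
    (hC : ∀ t ∈ Set.Ici (0:ℝ),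
      HasDerivWithinAt C (-(C t) ^ 2 / (A t) ^ 2) (Set.Ici 0) t)
    (hD : ∀ t ∈ Set.Ici (0:ℝ), HasDerivWithinAt D (4 * a3 ^ 2) (Set.Ici 0) t)
    (hA0 : A 0 = l1) (hC0 : C 0 = l3) (hD0 : D 0 = l4)
    (c : ℝ) (hc : 0 < c) (hClim : Filter.Tendsto C Filter.atTop (nhds c))
    (hAb : ∀ t ∈ Set.Ici (0:ℝ), HasDerivWithinAt Ab (Cb t / Ab t + 2) (Set.Ici 0) t)
    (hCb : ∀ t ∈ Set.Ici (0:ℝ),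
      HasDerivWithinAt Cb (-(Cb t) ^ 2 / (Ab t) ^ 2) (Set.Ici 0) t)
    (hDb : ∀ t ∈ Set.Ici (0:ℝ), HasDerivWithinAt Db (4 * a3 ^ 2) (Set.Ici 0) t)
    (hAb0 : Ab 0 = m1) (hCb0 : Cb 0 = m3) (hDb0 : Db 0 = m4)
    (cb : ℝ) (hcb : 0 < cb) (hCblim : Filter.Tendsto Cb Filter.atTop (nhds cb)) :
    Filter.Tendsto (fun t : ℝ =>
        2 * ((A t - Ab t) / A t) ^ 2 + ((C t - Cb t) / C t) ^ 2 +
        ((D t - Db t) / D t) ^ 2)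
      Filter.atTop (nhds 0) ↔ cb = c := by
  -- bounds for A, Ab
  have hAbd := stmt15_bounds l1 l3 hl1 hl3 A C hApos hCpos hA hC hA0 hC0
  have hAbbd := stmt15_bounds m1 m3 hm1 hm3 Ab Cb hAbpos hCbpos hAb hCb hAb0 hCb0
  -- term 1 tends to zero
  have hterm1 : Filter.Tendsto (fun t => (A t - Ab t) / A t) Filter.atTop (nhds 0) := by
    set N : ℝ → ℝ := fun t =>
      (|l1 - m1| + (l3 / 2) * Real.log (1 + 2 * t / l1)
        + (m3 / 2) * Real.log (1 + 2 * t / m1)) / (l1 + 2 * t) with hN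
    have hNlim : Filter.Tendsto N Filter.atTop (nhds 0) := by
      have h1 : Filter.Tendsto (fun t : ℝ => |l1 - m1| / (l1 + 2 * t))
          Filter.atTop (nhds 0) := by
        apply Filter.Tendsto.div_atTop tendsto_const_nhds
        apply Filter.tendsto_atTop_add_const_left
        exact Filter.Tendsto.const_mul_atTop two_pos Filter.tendsto_id
      have h2 := (stmt15_logdiv (q := l1) hl1).const_mul (l3 / 2)
      have h3 := (stmt15_logdiv (q := l1) hm1).const_mul (m3 / 2)
      have := (h1.add h2).add h3
      simp only [mul_zero, add_zero] at this
      apply this.congr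
      intro t
      simp only [hN]
      ring
    apply squeeze_zero_norm' _ hNlim
    filter_upwards [Filter.eventually_ge_atTop (0:ℝ)] with t ht
    have ht' : t ∈ Set.Ici (0:ℝ) := ht
    obtain ⟨hA1, hA2⟩ := hAbd t ht'
    obtain ⟨hB1, hB2⟩ := hAbbd t ht'
    have hL1 : 0 ≤ Real.log (1 + 2 * t / l1) := by
      apply Real.log_nonneg
      have : (0:ℝ) ≤ 2 * t / l1 := div_nonneg (by linarith) hl1.le
      linarith
    have hL2 : 0 ≤ Real.log (1 + 2 * t / m1) := by
      apply Real.log_nonneg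
      have : (0:ℝ) ≤ 2 * t / m1 := div_nonneg (by linarith) hm1.le
      linarith
    have habs1 := le_abs_self (l1 - m1)
    have habs2 := neg_abs_le (l1 - m1)
    have hApos' := hApos t ht'
    have hnum : |A t - Ab t| ≤ |l1 - m1| + (l3 / 2) * Real.log (1 + 2 * t / l1)
        + (m3 / 2) * Real.log (1 + 2 * t / m1) := by
      rw [abs_le]
      constructor <;> nlinarith
    rw [Real.norm_eq_abs, abs_div, abs_of_pos hApos']
    apply div_le_div₀ (by positivity) hnum (by linarith) hA1
  -- term 2
  have hterm2 : Filter.Tendsto (fun t => (C t - Cb t) / C t) Filter.atTop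
      (nhds ((c - cb) / c)) := (hClim.sub hCblim).div hClim hc.ne'
  -- term 3
  have hDlin := stmt15_lin a3 l4 D hD hD0
  have hDblin := stmt15_lin a3 m4 Db hDb hDb0
  have hterm3 : Filter.Tendsto (fun t => (D t - Db t) / D t) Filter.atTop (nhds 0) := by
    have hlin : Filter.Tendsto (fun t : ℝ => l4 + 4 * a3 ^ 2 * t) Filter.atTop
        Filter.atTop := by
      apply Filter.tendsto_atTop_add_const_left
      exact Filter.Tendsto.const_mul_atTop (by positivity) Filter.tendsto_id
    have h0 : Filter.Tendsto (fun t : ℝ => (l4 - m4) / (l4 + 4 * a3 ^ 2 * t))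
        Filter.atTop (nhds 0) := Filter.Tendsto.div_atTop tendsto_const_nhds hlin
    apply h0.congr'
    filter_upwards [Filter.eventually_ge_atTop (0:ℝ)] with t ht
    rw [hDlin t ht, hDblin t ht]
    ring_nf
  -- total limit
  have htot : Filter.Tendsto (fun t : ℝ =>
      2 * ((A t - Ab t) / A t) ^ 2 + ((C t - Cb t) / C t) ^ 2 +
      ((D t - Db t) / D t) ^ 2) Filter.atTop
      (nhds (2 * 0 ^ 2 + ((c - cb) / c) ^ 2 + 0 ^ 2)) :=
    (((hterm1.pow 2).const_mul 2).add (hterm2.pow 2)).add (hterm3.pow 2)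
  simp only [ne_eq, OfNat.ofNat_ne_zero, not_false_eq_true, zero_pow, mul_zero,
    zero_add, add_zero] at htot
  constructor
  · intro h
    have heq := tendsto_nhds_unique h htot
    have h2 : (c - cb) / c = 0 := by
      have := heq.symm
      nlinarith [sq_nonneg ((c - cb) / c)]
    rw [div_eq_zero_iff] at h2
    rcases h2 with h2 | h2
    · linarith
    · exact absurd h2 hc.ne'
  · intro h
    subst h
    simpa using htot
end

section
/- Let a₃ ≠ 0 and a₃' ≠ 0 be real, set a = a₃ - a₃', and let λ₁,λ₃,λ₄ and λ̄₁,λ̄₃,λ̄₄ be positive reals. Suppose A,C,D : [0,∞) → (0,∞) are differentiable and satisfy dA/dt = C/A + 2, dC/dt = -C²/A², dD/dt = 4a₃² with A(0)=λ₁, C(0)=λ₃, D(0)=λ₄ and C(t) → c > 0 as t → ∞; suppose Ā,C̄ satisfy the same first two equations with Ā(0)=λ̄₁, C̄(0)=λ̄₃ and C̄(t) → c̄ > 0, while D̄ satisfies dD̄/dt = 4a₃'² with D̄(0)=λ̄₄. Then 2((A-Ā)/A)² + ((C-C̄)/C)² + ((D-D̄-a²C̄)/D)² + 2(aC̄)²/(CD)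 tends to 0 as t → ∞ if and only if a₃'² = a₃² and c̄ = c; in particular the quasi-convergence class [g] is exactly a 2-parameter family. -/
open Set Filter

lemma monoOn_aux {f f' : ℝ → ℝ}
    (hf : ∀ t ∈ Ici (0:ℝ), HasDerivWithinAt f (f' t) (Ici 0) t)
    (h0 : ∀ t ∈ Ioi (0:ℝ), 0 ≤ f' t) : MonotoneOn f (Ici 0) := by
  apply monotoneOn_of_deriv_nonneg (convex_Ici 0)
    (fun t ht => (hf t ht).continuousWithinAt)
  · intro t ht
    rw [interior_Ici] at ht
    exact ((hf t (Ioi_subset_Ici_self ht)).hasDerivAt (Ici_mem_nhds ht)).differentiableAt.differentiableWithinAt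
  · intro t ht
    rw [interior_Ici] at ht
    rw [((hf t (Ioi_subset_Ici_self ht)).hasDerivAt (Ici_mem_nhds ht)).deriv]
    exact h0 t ht

lemma antiOn_aux {f f' : ℝ → ℝ}
    (hf : ∀ t ∈ Ici (0:ℝ), HasDerivWithinAt f (f' t) (Ici 0) t)
    (h0 : ∀ t ∈ Ioi (0:ℝ), f' t ≤ 0) : AntitoneOn f (Ici 0) := by
  apply antitoneOn_of_deriv_nonpos (convex_Ici 0)
    (fun t ht => (hf t ht).continuousWithinAt)
  · intro t ht
    rw [interior_Ici] at ht
    exact ((hf t (Ioi_subset_Ici_self ht)).hasDerivAt (Ici_mem_nhds ht)).differentiableAt.differentiableWithinAt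
  · intro t ht
    rw [interior_Ici] at ht
    rw [((hf t (Ioi_subset_Ici_self ht)).hasDerivAt (Ici_mem_nhds ht)).deriv]
    exact h0 t ht


lemma lin_aux {f : ℝ → ℝ} {k : ℝ}
    (hf : ∀ t ∈ Ici (0:ℝ), HasDerivWithinAt f k (Ici 0) t) :
    ∀ t ∈ Ici (0:ℝ), f t = f 0 + k * t := by
  intro t ht
  have hg : ∀ s ∈ Ici (0:ℝ),
      HasDerivWithinAt (fun u => f u - k * u) ((fun _ : ℝ => (0:ℝ)) s) (Ici 0) s := by
    intro s hs
    have := (hf s hs).sub (((hasDerivAt_id s).const_mul k).hasDerivWithinAt)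
    exact this.congr_deriv (by simp)
  have h1 := monoOn_aux hg (fun s _ => le_refl 0) (self_mem_Ici) ht ht
  have h2 := antiOn_aux hg (fun s _ => le_refl 0) (self_mem_Ici) ht ht
  simp only [mul_zero, sub_zero] at h1 h2
  have : f t - k * t = f 0 := le_antisymm h2 h1
  linarith

lemma sys_A_div_t {A C : ℝ → ℝ} {l1 l3 : ℝ} (hl1 : 0 < l1) (hl3 : 0 < l3)
    (hApos : ∀ t ∈ Ici (0:ℝ), 0 < A t) (hCpos : ∀ t ∈ Ici (0:ℝ), 0 < C t)
    (hA : ∀ t ∈ Ici (0:ℝ), HasDerivWithinAt A (C t / A t + 2) (Ici 0) t)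
    (hC : ∀ t ∈ Ici (0:ℝ), HasDerivWithinAt C (-(C t) ^ 2 / (A t) ^ 2) (Ici 0) t)
    (hA0 : A 0 = l1) (hC0 : C 0 = l3) :
    Tendsto (fun t => A t / t) atTop (nhds 2) := by
  -- C is bounded by l3
  have hCle : ∀ t ∈ Ici (0:ℝ), C t ≤ l3 := by
    intro t ht
    have := antiOn_aux hC (fun s hs => div_nonpos_iff.mpr
      (Or.inr ⟨neg_nonpos.mpr (sq_nonneg _), sq_nonneg _⟩)) (self_mem_Ici) ht ht
    simpa [hC0] using this
  -- lower bound for A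
  have hAlb : ∀ t ∈ Ici (0:ℝ), l1 + 2 * t ≤ A t := by
    intro t ht
    have hmono := monoOn_aux (f := fun t => A t - 2 * t) (f' := fun t => C t / A t)
      (fun s hs => by
        have := (hA s hs).sub (((hasDerivAt_id s).const_mul 2).hasDerivWithinAt)
        exact this.congr_deriv (by simp))
      (fun s hs => le_of_lt (div_pos (hCpos s (Ioi_subset_Ici_self hs)) (hApos s (Ioi_subset_Ici_self hs))))
    have := hmono (self_mem_Ici) ht ht
    simp only [hA0, mul_zero, sub_zero] at this
    linarith
  -- upper bound for A
  have hAub : ∀ t ∈ Ici (0:ℝ),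
      A t ≤ l1 + 2 * t + l3 / 2 * (Real.log (l1 + 2 * t) - Real.log l1) := by
    intro t ht
    have hanti := antiOn_aux
      (f := fun t => A t - 2 * t - l3 / 2 * Real.log (l1 + 2 * t))
      (f' := fun t => C t / A t - l3 / (l1 + 2 * t))
      (fun s hs => by
        have hpos : (0:ℝ) < l1 + 2 * s := by nlinarith [hs.out]
        have hlog : HasDerivAt (fun t : ℝ => Real.log (l1 + 2 * t))
            (2 / (l1 + 2 * s)) s := by
          have h2 : HasDerivAt (fun t : ℝ => l1 + 2 * t) 2 s := by
            simpa using ((hasDerivAt_id s).const_mul 2).const_add l1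
          simpa using h2.log (ne_of_gt hpos)
        have := (hA s hs).sub (((hasDerivAt_id s).const_mul 2).hasDerivWithinAt)
          |>.sub ((hlog.const_mul (l3 / 2)).hasDerivWithinAt)
        refine this.congr_deriv ?_
        field_simp
        try ring)
      (fun s hs => by
        have hpos : (0:ℝ) < l1 + 2 * s := by nlinarith [hs.out]
        have : C s / A s ≤ l3 / (l1 + 2 * s) :=
          div_le_div₀ hl3.le (hCle s (Ioi_subset_Ici_self hs)) hpos (hAlb s (Ioi_subset_Ici_self hs))
        linarith)
    have := hanti (self_mem_Ici) ht ht
    simp only [hA0, mul_zero, sub_zero, add_zero] at this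
    linarith
  -- log (l1 + 2t) / t → 0
  have hlog0 : Tendsto (fun t : ℝ => Real.log (l1 + 2 * t) / t) atTop (nhds 0) := by
    have h1 : Tendsto (fun t : ℝ => l1 + 2 * t) atTop atTop :=
      tendsto_atTop_add_const_left _ _ (tendsto_id.const_mul_atTop two_pos)
    have h2 : (fun t : ℝ => Real.log (l1 + 2 * t)) =o[atTop] (fun t : ℝ => l1 + 2 * t) :=
      Real.isLittleO_log_id_atTop.comp_tendsto h1
    have h3 : (fun t : ℝ => l1 + 2 * t) =O[atTop] (fun t : ℝ => t) := by
      apply Asymptotics.IsBigO.of_bound (|l1| + 2)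
      filter_upwards [eventually_ge_atTop (1:ℝ)] with t ht
      have h4 : |l1 + 2 * t| ≤ |l1| + 2 * |t| := by
        calc |l1 + 2 * t| ≤ |l1| + |2 * t| := abs_add_le _ _
        _ = |l1| + 2 * |t| := by rw [abs_mul]; norm_num
      have ht1 : (1:ℝ) ≤ |t| := by rw [abs_of_nonneg (by linarith : (0:ℝ) ≤ t)]; linarith
      calc ‖l1 + 2 * t‖ = |l1 + 2 * t| := rfl
      _ ≤ |l1| + 2 * |t| := h4
      _ ≤ (|l1| + 2) * ‖t‖ := by
            simp only [Real.norm_eq_abs]; nlinarith [abs_nonneg l1]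
    exact (h2.trans_isBigO h3).tendsto_div_nhds_zero
  -- squeeze: (A t - 2 t)/t → 0
  have hsq : Tendsto (fun t : ℝ => (A t - 2 * t) / t) atTop (nhds 0) := by
    have hlo : Tendsto (fun t : ℝ => l1 / t) atTop (nhds 0) :=
      tendsto_const_nhds.div_atTop tendsto_id
    have hhi : Tendsto
        (fun t : ℝ => l1 / t + l3 / 2 * (Real.log (l1 + 2 * t) / t)
          - (l3 / 2 * Real.log l1) / t) atTop (nhds 0) := by
      have h9 : Tendsto (fun t : ℝ => (l3 / 2 * Real.log l1) / t) atTop (nhds 0) :=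
        tendsto_const_nhds.div_atTop tendsto_id
      have := (hlo.add (hlog0.const_mul (l3 / 2))).sub h9
      simpa using this
    apply tendsto_of_tendsto_of_tendsto_of_le_of_le' hlo hhi
    · filter_upwards [eventually_gt_atTop (0:ℝ)] with t ht
      have h := hAlb t ht.le
      exact (div_le_div_iff_of_pos_right ht).mpr (by linarith)
    · filter_upwards [eventually_gt_atTop (0:ℝ)] with t ht
      have h := hAub t ht.le
      have h2 : (A t - 2 * t) / t
          ≤ (l1 + l3 / 2 * (Real.log (l1 + 2 * t) - Real.log l1)) / t :=
        (div_le_div_iff_of_pos_right ht).mpr (by linarith)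
      apply h2.trans_eq
      field_simp
      ring
  have := hsq.add (tendsto_const_nhds (x := (2:ℝ)))
  rw [zero_add] at this
  apply Tendsto.congr' _ this
  filter_upwards [eventually_gt_atTop (0:ℝ)] with t ht
  field_simp
  ring

/-- class A9ii, different frames: quasi-convergence holds iff
`a₃'² = a₃²` and the limits of `C` and `C̄` agree; `[g]` is a 2-parameter
family. -/
theorem stmt_16 (a3 a3' : ℝ) (ha3 : a3 ≠ 0) (ha3' : a3' ≠ 0)
    (a : ℝ) (ha : a = a3 - a3')
    (l1 l3 l4 m1 m3 m4 : ℝ)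
    (hl1 : 0 < l1) (hl3 : 0 < l3) (hl4 : 0 < l4)
    (hm1 : 0 < m1) (hm3 : 0 < m3) (hm4 : 0 < m4)
    (A C D Ab Cb Db : ℝ → ℝ)
    (hApos : ∀ t ∈ Set.Ici (0:ℝ), 0 < A t) (hCpos : ∀ t ∈ Set.Ici (0:ℝ), 0 < C t)
    (hDpos : ∀ t ∈ Set.Ici (0:ℝ), 0 < D t)
    (hAbpos : ∀ t ∈ Set.Ici (0:ℝ), 0 < Ab t) (hCbpos : ∀ t ∈ Set.Ici (0:ℝ), 0 < Cb t)
    (hDbpos : ∀ t ∈ Set.Ici (0:ℝ), 0 < Db t)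
    (hA : ∀ t ∈ Set.Ici (0:ℝ), HasDerivWithinAt A (C t / A t + 2) (Set.Ici 0) t)
    (hC : ∀ t ∈ Set.Ici (0:ℝ),
      HasDerivWithinAt C (-(C t) ^ 2 / (A t) ^ 2) (Set.Ici 0) t)
    (hD : ∀ t ∈ Set.Ici (0:ℝ), HasDerivWithinAt D (4 * a3 ^ 2) (Set.Ici 0) t)
    (hA0 : A 0 = l1) (hC0 : C 0 = l3) (hD0 : D 0 = l4)
    (c : ℝ) (hc : 0 < c) (hClim : Filter.Tendsto C Filter.atTop (nhds c))
    (hAb : ∀ t ∈ Set.Ici (0:ℝ), HasDerivWithinAt Ab (Cb t / Ab t + 2) (Set.Ici 0) t)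
    (hCb : ∀ t ∈ Set.Ici (0:ℝ),
      HasDerivWithinAt Cb (-(Cb t) ^ 2 / (Ab t) ^ 2) (Set.Ici 0) t)
    (hDb : ∀ t ∈ Set.Ici (0:ℝ), HasDerivWithinAt Db (4 * a3' ^ 2) (Set.Ici 0) t)
    (hAb0 : Ab 0 = m1) (hCb0 : Cb 0 = m3) (hDb0 : Db 0 = m4)
    (cb : ℝ) (hcb : 0 < cb) (hCblim : Filter.Tendsto Cb Filter.atTop (nhds cb)) :
    Filter.Tendsto (fun t : ℝ =>
        2 * ((A t - Ab t) / A t) ^ 2 + ((C t - Cb t) / C t) ^ 2 +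
        ((D t - Db t - a ^ 2 * Cb t) / D t) ^ 2 +
        2 * (a * Cb t) ^ 2 / (C t * D t))
      Filter.atTop (nhds 0) ↔ (a3' ^ 2 = a3 ^ 2 ∧ cb = c) := by
  have ha3sq : (0:ℝ) < a3 ^ 2 := by positivity
  -- linear formulas for D and Db
  have hDlin : ∀ t ∈ Ici (0:ℝ), D t = l4 + 4 * a3 ^ 2 * t := by
    intro t ht
    have := lin_aux hD t ht
    rw [hD0] at this; exact this
  have hDblin : ∀ t ∈ Ici (0:ℝ), Db t = m4 + 4 * a3' ^ 2 * t := by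
    intro t ht
    have := lin_aux hDb t ht
    rw [hDb0] at this; exact this
  -- D → ∞
  have hDtop : Tendsto D atTop atTop := by
    have hlin : Tendsto (fun t : ℝ => l4 + 4 * a3 ^ 2 * t) atTop atTop :=
      tendsto_atTop_add_const_left _ _ (tendsto_id.const_mul_atTop (by positivity))
    apply Tendsto.congr' _ hlin
    filter_upwards [eventually_ge_atTop (0:ℝ)] with t ht
    exact (hDlin t ht).symm
  -- A/t → 2, Ab/t → 2
  have hAt : Tendsto (fun t => A t / t) atTop (nhds 2) :=
    sys_A_div_t hl1 hl3 hApos hCpos hA hC hA0 hC0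
  have hAbt : Tendsto (fun t => Ab t / t) atTop (nhds 2) :=
    sys_A_div_t hm1 hm3 hAbpos hCbpos hAb hCb hAb0 hCb0
  -- term 1
  have hT1 : Tendsto (fun t => 2 * ((A t - Ab t) / A t) ^ 2) atTop (nhds 0) := by
    have hdiv : Tendsto (fun t => (Ab t / t) / (A t / t)) atTop (nhds 1) := by
      have := hAbt.div hAt (two_ne_zero)
      norm_num at this
      exact this
    have hr : Tendsto (fun t => (A t - Ab t) / A t) atTop (nhds 0) := by
      have := (tendsto_const_nhds (x := (1:ℝ))).sub hdiv
      rw [sub_self] at this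
      apply Tendsto.congr' _ this
      filter_upwards [eventually_gt_atTop (0:ℝ)] with t ht
      have hA0' : A t ≠ 0 := ne_of_gt (hApos t ht.le)
      field_simp
    have := (hr.pow 2).const_mul 2
    norm_num at this
    exact this
  -- term 2
  have hT2 : Tendsto (fun t => ((C t - Cb t) / C t) ^ 2) atTop
      (nhds (((c - cb) / c) ^ 2)) :=
    ((hClim.sub hCblim).div hClim (ne_of_gt hc)).pow 2
  -- term 3
  have hT3 : Tendsto (fun t => ((D t - Db t - a ^ 2 * Cb t) / D t) ^ 2) atTop
      (nhds (((a3 ^ 2 - a3' ^ 2) / a3 ^ 2) ^ 2)) := by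
    have hnum : Tendsto (fun t : ℝ => (l4 - m4 - a ^ 2 * Cb t) / t + 4 * (a3 ^ 2 - a3' ^ 2))
        atTop (nhds (0 + 4 * (a3 ^ 2 - a3' ^ 2))) :=
      (((tendsto_const_nhds (x := (l4 - m4 : ℝ))).sub (hCblim.const_mul (a ^ 2))).div_atTop
        tendsto_id).add tendsto_const_nhds
    have hden : Tendsto (fun t : ℝ => l4 / t + 4 * a3 ^ 2) atTop (nhds (0 + 4 * a3 ^ 2)) :=
      (tendsto_const_nhds.div_atTop tendsto_id).add tendsto_const_nhds
    have hq := hnum.div hden (by positivity)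
    have hval : (0 + 4 * (a3 ^ 2 - a3' ^ 2)) / (0 + 4 * a3 ^ 2)
        = (a3 ^ 2 - a3' ^ 2) / a3 ^ 2 := by
      rw [zero_add, zero_add, mul_div_mul_left _ _ (by norm_num : (4:ℝ) ≠ 0)]
    rw [hval] at hq
    have hbase : Tendsto (fun t => (D t - Db t - a ^ 2 * Cb t) / D t) atTop
        (nhds ((a3 ^ 2 - a3' ^ 2) / a3 ^ 2)) := by
      apply Tendsto.congr' _ hq
      filter_upwards [eventually_gt_atTop (0:ℝ)] with t ht
      simp only [Pi.div_apply]
      rw [hDlin t ht.le, hDblin t ht.le]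
      have hd : (0:ℝ) < l4 + 4 * a3 ^ 2 * t := by positivity
      field_simp
      ring
    exact hbase.pow 2
  -- term 4
  have hT4 : Tendsto (fun t => 2 * (a * Cb t) ^ 2 / (C t * D t)) atTop (nhds 0) := by
    have hden : Tendsto (fun t => C t * D t) atTop atTop :=
      hClim.pos_mul_atTop hc hDtop
    exact (((hCblim.const_mul a).pow 2).const_mul 2).div_atTop hden
  have hsum := ((hT1.add hT2).add hT3).add hT4
  rw [zero_add, add_zero] at hsum
  constructor
  · intro h
    have hL := tendsto_nhds_unique hsum h
    have hs1 := sq_nonneg ((c - cb) / c)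
    have hs2 := sq_nonneg ((a3 ^ 2 - a3' ^ 2) / a3 ^ 2)
    have e1 : ((c - cb) / c) ^ 2 = 0 := by linarith
    have e2 : ((a3 ^ 2 - a3' ^ 2) / a3 ^ 2) ^ 2 = 0 := by linarith
    have f1 : (c - cb) / c = 0 := by
      have := sq_eq_zero_iff.mp e1; exact this
    have f2 : (a3 ^ 2 - a3' ^ 2) / a3 ^ 2 = 0 := by
      have := sq_eq_zero_iff.mp e2; exact this
    rw [div_eq_zero_iff] at f1 f2
    constructor
    · rcases f2 with h' | h'
      · linarith
      · exact absurd h' (ne_of_gt ha3sq)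
    · rcases f1 with h' | h'
      · linarith
      · exact absurd h' (ne_of_gt hc)
  · rintro ⟨h1, h2⟩
    have : ((c - cb) / c) ^ 2 + ((a3 ^ 2 - a3' ^ 2) / a3 ^ 2) ^ 2 = 0 := by
      rw [h1, h2]; norm_num
    rw [this] at hsum
    exact hsum
end

section
/- Let λ₁,λ₂,λ₃,λ₄ be positive reals and set E₀ = λ₂/(λ₁λ₄), F₀ = λ₃/(λ₂λ₄). Then the functions A(t)=λ₁(3E₀t+1)^{1/3}, B(t)=λ₂(3E₀t+1)^{-1/3}(3F₀t+1)^{1/3}, C(t)=λ₃(3F₀t+1)^{-1/3}, D(t)=λ₄(3E₀t+1)^{1/3}(3F₀t+1)^{1/3} are positive and differentiable on [0,∞), take the values λ₁,λ₂,λ₃,λ₄ at t = 0, and satisfy the ODE system dA/dt = B/D, dB/dt = (AC - B²)/(AD), dC/dt = -C²/(BD), dD/dt = B/A + C/B for all t ≥ 0. -/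
lemma stmt17_aux (c p t : ℝ) (h : 0 < 3 * c * t + 1) :
    HasDerivAt (fun s : ℝ => (3 * c * s + 1) ^ p)
      (3 * c * p * (3 * c * t + 1) ^ (p - 1)) t := by
  have h1 : HasDerivAt (fun s : ℝ => 3 * c * s + 1) (3 * c) t := by
    simpa using ((hasDerivAt_id t).const_mul (3 * c)).add_const 1
  exact h1.rpow_const (Or.inl h.ne')

/-- class A6: the displayed explicit functions are positive,
take the prescribed initial values, and solve the A6 Ricci-flow ODE system on
`[0,∞)`. -/
theorem stmt_17 (l1 l2 l3 l4 : ℝ)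
    (hl1 : 0 < l1) (hl2 : 0 < l2) (hl3 : 0 < l3) (hl4 : 0 < l4)
    (E0 F0 : ℝ) (hE0 : E0 = l2 / (l1 * l4)) (hF0 : F0 = l3 / (l2 * l4))
    (A B C D : ℝ → ℝ)
    (hA : ∀ t : ℝ, A t = l1 * (3 * E0 * t + 1) ^ ((1:ℝ)/3))
    (hB : ∀ t : ℝ, B t = l2 * (3 * E0 * t + 1) ^ (-(1:ℝ)/3) * (3 * F0 * t + 1) ^ ((1:ℝ)/3))
    (hC : ∀ t : ℝ, C t = l3 * (3 * F0 * t + 1) ^ (-(1:ℝ)/3))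
    (hD : ∀ t : ℝ, D t = l4 * (3 * E0 * t + 1) ^ ((1:ℝ)/3) * (3 * F0 * t + 1) ^ ((1:ℝ)/3)) :
    (∀ t ∈ Set.Ici (0:ℝ), 0 < A t ∧ 0 < B t ∧ 0 < C t ∧ 0 < D t) ∧
    A 0 = l1 ∧ B 0 = l2 ∧ C 0 = l3 ∧ D 0 = l4 ∧
    (∀ t ∈ Set.Ici (0:ℝ),
      HasDerivWithinAt A (B t / D t) (Set.Ici 0) t ∧
      HasDerivWithinAt B ((A t * C t - (B t) ^ 2) / (A t * D t)) (Set.Ici 0) t ∧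
      HasDerivWithinAt C (-(C t) ^ 2 / (B t * D t)) (Set.Ici 0) t ∧
      HasDerivWithinAt D (B t / A t + C t / B t) (Set.Ici 0) t) := by
  have hE0' : 0 < E0 := by rw [hE0]; positivity
  have hF0' : 0 < F0 := by rw [hF0]; positivity
  have hu : ∀ t : ℝ, 0 ≤ t → 0 < 3 * E0 * t + 1 := by
    intro t ht
    nlinarith [mul_nonneg (mul_nonneg (by norm_num : (0:ℝ) ≤ 3) hE0'.le) ht]
  have hv : ∀ t : ℝ, 0 ≤ t → 0 < 3 * F0 * t + 1 := by
    intro t ht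
    nlinarith [mul_nonneg (mul_nonneg (by norm_num : (0:ℝ) ≤ 3) hF0'.le) ht]
  refine ⟨?_, ?_, ?_, ?_, ?_, ?_⟩
  · intro t ht
    have h1 := hu t ht
    have h2 := hv t ht
    refine ⟨?_, ?_, ?_, ?_⟩
    · rw [hA]; positivity
    · rw [hB]; positivity
    · rw [hC]; positivity
    · rw [hD]; positivity
  · simp [hA]
  · simp [hB]
  · simp [hC]
  · simp [hD]
  · intro t ht
    have ht' : (0:ℝ) ≤ t := ht
    have h1 := hu t ht'
    have h2 := hv t ht'
    set u : ℝ := 3 * E0 * t + 1 with hudef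
    set v : ℝ := 3 * F0 * t + 1 with hvdef
    set x : ℝ := u ^ ((1:ℝ)/3) with hxdef
    set y : ℝ := v ^ ((1:ℝ)/3) with hydef
    have hx : 0 < x := Real.rpow_pos_of_pos h1 _
    have hy : 0 < y := Real.rpow_pos_of_pos h2 _
    have hx3 : x ^ 3 = u := by
      rw [hxdef, ← Real.rpow_natCast (u ^ ((1:ℝ)/3)) 3, ← Real.rpow_mul h1.le]
      norm_num
    have hy3 : y ^ 3 = v := by
      rw [hydef, ← Real.rpow_natCast (v ^ ((1:ℝ)/3)) 3, ← Real.rpow_mul h2.le]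
      norm_num
    have hxm : u ^ (-(1:ℝ)/3) = x⁻¹ := by
      rw [neg_div, Real.rpow_neg h1.le, hxdef]
    have hym : v ^ (-(1:ℝ)/3) = y⁻¹ := by
      rw [neg_div, Real.rpow_neg h2.le, hydef]
    have hxd : u ^ ((1:ℝ)/3 - 1) = x / x ^ 3 := by
      rw [Real.rpow_sub h1, Real.rpow_one, hxdef, hx3]
    have hyd : v ^ ((1:ℝ)/3 - 1) = y / y ^ 3 := by
      rw [Real.rpow_sub h2, Real.rpow_one, hydef, hy3]
    have hxmd : u ^ (-(1:ℝ)/3 - 1) = x⁻¹ / x ^ 3 := by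
      rw [Real.rpow_sub h1, Real.rpow_one, hxm, hx3]
    have hymd : v ^ (-(1:ℝ)/3 - 1) = y⁻¹ / y ^ 3 := by
      rw [Real.rpow_sub h2, Real.rpow_one, hym, hy3]
    have hAfun : A = fun s => l1 * (3 * E0 * s + 1) ^ ((1:ℝ)/3) := funext hA
    have hBfun : B = fun s => l2 * (3 * E0 * s + 1) ^ (-(1:ℝ)/3) * (3 * F0 * s + 1) ^ ((1:ℝ)/3) :=
      funext hB
    have hCfun : C = fun s => l3 * (3 * F0 * s + 1) ^ (-(1:ℝ)/3) := funext hC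
    have hDfun : D = fun s => l4 * (3 * E0 * s + 1) ^ ((1:ℝ)/3) * (3 * F0 * s + 1) ^ ((1:ℝ)/3) :=
      funext hD
    refine ⟨?_, ?_, ?_, ?_⟩
    · -- A' = B / D
      have h := ((stmt17_aux E0 ((1:ℝ)/3) t h1).const_mul l1).hasDerivWithinAt
        (s := Set.Ici (0:ℝ))
      rw [← hAfun] at h
      refine h.congr_deriv ?_
      simp only [hB, hD, ← hudef, ← hvdef, hxm, hym, hxd, hyd, hxmd, hymd, ← hxdef, ← hydef]
      rw [hE0]
      field_simp
    · -- B' = (AC - B²)/(AD)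
      have hf : HasDerivAt (fun s : ℝ => l2 * (3 * E0 * s + 1) ^ (-(1:ℝ)/3))
          (l2 * (3 * E0 * (-(1:ℝ)/3) * u ^ (-(1:ℝ)/3 - 1))) t :=
        (stmt17_aux E0 (-(1:ℝ)/3) t h1).const_mul l2
      have hg := stmt17_aux F0 ((1:ℝ)/3) t h2
      have h := (hf.mul hg).hasDerivWithinAt (s := Set.Ici (0:ℝ))
      simp only [Pi.mul_def] at h
      rw [← hBfun] at h
      refine h.congr_deriv ?_
      simp only [hA, hB, hC, hD, ← hudef, ← hvdef, hxm, hym, hxd, hyd, hxmd, hymd,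
        ← hxdef, ← hydef]
      rw [hE0, hF0]
      field_simp
      ring
    · -- C' = -C²/(BD)
      have h := ((stmt17_aux F0 (-(1:ℝ)/3) t h2).const_mul l3).hasDerivWithinAt
        (s := Set.Ici (0:ℝ))
      rw [← hCfun] at h
      refine h.congr_deriv ?_
      simp only [hB, hC, hD, ← hudef, ← hvdef, hxm, hym, hxd, hyd, hxmd, hymd,
        ← hxdef, ← hydef]
      rw [hF0]
      field_simp
    · -- D' = B/A + C/B
      have hf : HasDerivAt (fun s : ℝ => l4 * (3 * E0 * s + 1) ^ ((1:ℝ)/3))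
          (l4 * (3 * E0 * ((1:ℝ)/3) * u ^ ((1:ℝ)/3 - 1))) t :=
        (stmt17_aux E0 ((1:ℝ)/3) t h1).const_mul l4
      have hg := stmt17_aux F0 ((1:ℝ)/3) t h2
      have h := (hf.mul hg).hasDerivWithinAt (s := Set.Ici (0:ℝ))
      simp only [Pi.mul_def] at h
      rw [← hDfun] at h
      refine h.congr_deriv ?_
      simp only [hA, hB, hC, hD, ← hudef, ← hvdef, hxm, hym, hxd, hyd, hxmd, hymd,
        ← hxdef, ← hydef]
      rw [hE0, hF0]
      field_simp
end

section
/- Let λ₁,λ₂,λ₃,λ₄ be positive reals and suppose A,B,C,D : [0,∞) → (0,∞) are differentiable and satisfy dA/dt = B/C + C/B + 2, dB/dt = C/A + D/C - B²/(AC), dC/dt = B/A + D/B - C²/(AB), dD/dt = -D²/(BC) with A(0)=λ₁, B(0)=λ₂, C(0)=λ₃, D(0)=λ₄. Then for all t ≥ 0: B(t)C(t)D(t)² = λ₂λ₃λ₄², A(t)D(t)(B(t)-C(t)) = λ₁λ₄(λ₂-λ₃), and D(t) = λ₄(1 + 3λ₄t/(λ₂λ₃))^{-1/3}. -/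
/-- class A7i: conserved quantities `BCD²` and `AD(B-C)` of the
A7i Ricci-flow ODE system, and the explicit formula for `D`. -/
theorem stmt_18 (l1 l2 l3 l4 : ℝ)
    (hl1 : 0 < l1) (hl2 : 0 < l2) (hl3 : 0 < l3) (hl4 : 0 < l4)
    (A B C D : ℝ → ℝ)
    (hApos : ∀ t ∈ Set.Ici (0:ℝ), 0 < A t) (hBpos : ∀ t ∈ Set.Ici (0:ℝ), 0 < B t)
    (hCpos : ∀ t ∈ Set.Ici (0:ℝ), 0 < C t) (hDpos : ∀ t ∈ Set.Ici (0:ℝ), 0 < D t)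
    (hA : ∀ t ∈ Set.Ici (0:ℝ),
      HasDerivWithinAt A (B t / C t + C t / B t + 2) (Set.Ici 0) t)
    (hB : ∀ t ∈ Set.Ici (0:ℝ),
      HasDerivWithinAt B (C t / A t + D t / C t - (B t) ^ 2 / (A t * C t)) (Set.Ici 0) t)
    (hC : ∀ t ∈ Set.Ici (0:ℝ),
      HasDerivWithinAt C (B t / A t + D t / B t - (C t) ^ 2 / (A t * B t)) (Set.Ici 0) t)
    (hD : ∀ t ∈ Set.Ici (0:ℝ),
      HasDerivWithinAt D (-(D t) ^ 2 / (B t * C t)) (Set.Ici 0) t)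
    (hA0 : A 0 = l1) (hB0 : B 0 = l2) (hC0 : C 0 = l3) (hD0 : D 0 = l4) :
    ∀ t ∈ Set.Ici (0:ℝ),
      B t * C t * (D t) ^ 2 = l2 * l3 * l4 ^ 2 ∧
      A t * D t * (B t - C t) = l1 * l4 * (l2 - l3) ∧
      D t = l4 * (1 + 3 * l4 * t / (l2 * l3)) ^ (-(1:ℝ)/3) := by
  have key : ∀ f : ℝ → ℝ, (∀ t ∈ Set.Ici (0:ℝ), HasDerivWithinAt f 0 (Set.Ici 0) t) →
      ∀ t ∈ Set.Ici (0:ℝ), f t = f 0 := by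
    intro f hf t ht
    have hcont : ContinuousOn f (Set.Icc 0 t) := fun x hx =>
      ((hf x hx.1).continuousWithinAt).mono (fun y hy => hy.1)
    exact constant_of_has_deriv_right_zero hcont
      (fun x hx => (hf x hx.1).mono (Set.Ici_subset_Ici.mpr hx.1)) t
      (Set.right_mem_Icc.mpr ht)
  -- part 1
  have h1 : ∀ t ∈ Set.Ici (0:ℝ), B t * C t * (D t) ^ 2 = l2 * l3 * l4 ^ 2 := by
    intro t ht
    have := key (fun t => B t * C t * D t ^ 2) ?_ t ht
    · simpa [hB0, hC0, hD0] using this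
    intro s hs
    have hAp := (hApos s hs).ne'
    have hBp := (hBpos s hs).ne'
    have hCp := (hCpos s hs).ne'
    have h := ((hB s hs).mul (hC s hs)).mul ((hD s hs).pow 2)
    have he : ((C s / A s + D s / C s - B s ^ 2 / (A s * C s)) * C s +
        B s * (B s / A s + D s / B s - C s ^ 2 / (A s * B s))) * D s ^ 2 +
        B s * C s * ((2 : ℕ) * D s ^ (2 - 1) * (-(D s) ^ 2 / (B s * C s))) = 0 := by
      field_simp
      ring
    simp only [Pi.mul_apply, Pi.pow_apply, Pi.sub_apply] at h
    rw [he] at h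
    exact h
  -- part 2
  have h2 : ∀ t ∈ Set.Ici (0:ℝ), A t * D t * (B t - C t) = l1 * l4 * (l2 - l3) := by
    intro t ht
    have := key (fun t => A t * D t * (B t - C t)) ?_ t ht
    · simpa [hA0, hB0, hC0, hD0] using this
    intro s hs
    have hAp := (hApos s hs).ne'
    have hBp := (hBpos s hs).ne'
    have hCp := (hCpos s hs).ne'
    have h := ((hA s hs).mul (hD s hs)).mul ((hB s hs).sub (hC s hs))
    have he : ((B s / C s + C s / B s + 2) * D s +
        A s * (-(D s) ^ 2 / (B s * C s))) * (B s - C s) +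
        A s * D s * ((C s / A s + D s / C s - B s ^ 2 / (A s * C s)) -
          (B s / A s + D s / B s - C s ^ 2 / (A s * B s))) = 0 := by
      field_simp
      ring
    simp only [Pi.mul_apply, Pi.pow_apply, Pi.sub_apply] at h
    rw [he] at h
    exact h
  -- part 3 : (D t)⁻¹ ^ 3 = l4⁻¹ ^ 3 + 3 / (l2*l3*l4^2) * t
  have h3 : ∀ t ∈ Set.Ici (0:ℝ),
      (D t)⁻¹ ^ 3 = l4⁻¹ ^ 3 + 3 / (l2 * l3 * l4 ^ 2) * t := by
    intro t ht
    have := key (fun t => (D t)⁻¹ ^ 3 - 3 / (l2 * l3 * l4 ^ 2) * t) ?_ t ht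
    · simp only [hD0, mul_zero, sub_zero] at this
      linarith [this]
    intro s hs
    have hBp := (hBpos s hs).ne'
    have hCp := (hCpos s hs).ne'
    have hDp := (hDpos s hs).ne'
    have hKs := h1 s hs
    have h := (((hD s hs).inv hDp).pow 3).sub
      ((hasDerivWithinAt_id s (Set.Ici 0)).const_mul (3 / (l2 * l3 * l4 ^ 2)))
    have he : (3 : ℕ) * (D s)⁻¹ ^ (3 - 1) * (-(-(D s) ^ 2 / (B s * C s)) / (D s) ^ 2) -
        3 / (l2 * l3 * l4 ^ 2) * 1 = 0 := by
      rw [← hKs]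
      norm_num
      field_simp
      ring
    simp only [Pi.inv_apply] at h
    rw [he] at h
    exact h
  intro t ht
  refine ⟨h1 t ht, h2 t ht, ?_⟩
  have hDp := hDpos t ht
  have ht0 : (0:ℝ) ≤ t := ht
  have hP : (0:ℝ) < 1 + 3 * l4 * t / (l2 * l3) := by
    have : 0 ≤ 3 * l4 * t / (l2 * l3) := by positivity
    linarith
  have hrt := h3 t ht
  have hd := hDp.ne'
  have hD3 : D t ^ 3 * (1 + 3 * l4 * t / (l2 * l3)) = l4 ^ 3 := by
    field_simp at hrt ⊢
    have h4 : (D t ^ 3 * (l2 * l3 + 3 * l4 * t)) * l4 ^ 2 =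
        (l4 ^ 3 * (l2 * l3)) * l4 ^ 2 := by linear_combination -l4 ^ 2 * hrt
    linear_combination -hrt
  have hP3 : ((1 + 3 * l4 * t / (l2 * l3)) ^ (-(1:ℝ)/3)) ^ 3
      = (1 + 3 * l4 * t / (l2 * l3))⁻¹ := by
    rw [← Real.rpow_natCast ((1 + 3 * l4 * t / (l2 * l3)) ^ (-(1:ℝ)/3)) 3,
      ← Real.rpow_mul hP.le]
    norm_num
    rw [Real.rpow_neg_one]
  have hR3 : (l4 * (1 + 3 * l4 * t / (l2 * l3)) ^ (-(1:ℝ)/3)) ^ 3 *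
      (1 + 3 * l4 * t / (l2 * l3)) = l4 ^ 3 := by
    rw [mul_pow, hP3]
    field_simp
  have hcube : D t ^ 3 = (l4 * (1 + 3 * l4 * t / (l2 * l3)) ^ (-(1:ℝ)/3)) ^ 3 :=
    mul_right_cancel₀ hP.ne' (hD3.trans hR3.symm)
  have h3pos : (0:ℝ) < l4 * (1 + 3 * l4 * t / (l2 * l3)) ^ (-(1:ℝ)/3) :=
    mul_pos hl4 (Real.rpow_pos_of_pos hP _)
  exact (pow_left_strictMonoOn₀ (by norm_num : (3:ℕ) ≠ 0)).injOn hDp.le h3pos.le hcube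
end

section
/- Let λ₁,λ₃ be positive reals and suppose A,C : [0,∞) → (0,∞) are differentiable and satisfy dA/dt = C/A + 2 and dC/dt = -C²/A² with A(0)=λ₁, C(0)=λ₃. Then the quantity (A(t)+C(t))/(A(t)C(t)²) is constant in t, equal to c₁ = (λ₁+λ₃)/(λ₁λ₃²) > 0; equivalently C(t) = (1 + √(1 + 4c₁A(t)²))/(2c₁A(t)) for all t ≥ 0. Moreover A(t) → ∞ and C(t) → 1/√c₁ as t → ∞. -/
open Set Filter

/-- Auxiliary algebraic identity: for `x > 0`, `c1 > 0`, the explicit formula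
can be rewritten in a form convenient for passing to the limit. -/
lemma stmt_19_aux (c1 x : ℝ) (hc1 : 0 < c1) (hx : 0 < x) :
    (1 + Real.sqrt (1 + 4 * c1 * x ^ 2)) / (2 * c1 * x)
      = (2 * c1 * x)⁻¹ + Real.sqrt (((2 * c1 * x)⁻¹) ^ 2 + 1 / c1) := by
  have h2 : (0:ℝ) < 2 * c1 * x := by positivity
  rw [show ((2 * c1 * x)⁻¹) ^ 2 + 1 / c1 = (1 + 4 * c1 * x ^ 2) / (2 * c1 * x) ^ 2 by
    field_simp; ring]
  rw [Real.sqrt_div (by positivity), Real.sqrt_sq h2.le]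
  ring

/-- class A9ii: the quantity `(A+C)/(AC²)` is a conserved
positive constant `c₁`, `C` is given explicitly in terms of `A` and `c₁`, and
`A → ∞`, `C → 1/√c₁` as `t → ∞`. -/
theorem stmt_19 (l1 l3 : ℝ) (hl1 : 0 < l1) (hl3 : 0 < l3)
    (A C : ℝ → ℝ)
    (hApos : ∀ t ∈ Set.Ici (0:ℝ), 0 < A t) (hCpos : ∀ t ∈ Set.Ici (0:ℝ), 0 < C t)
    (hA : ∀ t ∈ Set.Ici (0:ℝ), HasDerivWithinAt A (C t / A t + 2) (Set.Ici 0) t)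
    (hC : ∀ t ∈ Set.Ici (0:ℝ),
      HasDerivWithinAt C (-(C t) ^ 2 / (A t) ^ 2) (Set.Ici 0) t)
    (hA0 : A 0 = l1) (hC0 : C 0 = l3)
    (c1 : ℝ) (hc1 : c1 = (l1 + l3) / (l1 * l3 ^ 2)) :
    0 < c1 ∧
    (∀ t ∈ Set.Ici (0:ℝ), (A t + C t) / (A t * (C t) ^ 2) = c1) ∧
    (∀ t ∈ Set.Ici (0:ℝ),
      C t = (1 + Real.sqrt (1 + 4 * c1 * (A t) ^ 2)) / (2 * c1 * A t)) ∧
    Filter.Tendsto A Filter.atTop Filter.atTop ∧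
    Filter.Tendsto C Filter.atTop (nhds (1 / Real.sqrt c1)) := by
  have hc1pos : 0 < c1 := by rw [hc1]; positivity
  -- the conserved quantity
  set F : ℝ → ℝ := fun t => (A t + C t) / (A t * (C t) ^ 2) with hF
  have hFderiv : ∀ t ∈ Set.Ici (0:ℝ), HasDerivWithinAt F 0 (Set.Ici 0) t := by
    intro t ht
    have ha := hApos t ht
    have hc := hCpos t ht
    have hD : A t * (C t) ^ 2 ≠ 0 := by positivity
    have h1 := ((hA t ht).add (hC t ht)).div ((hA t ht).mul ((hC t ht).pow 2)) hD
    refine HasDerivWithinAt.congr_deriv (f := F) h1 ?_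
    simp only [Pi.add_apply, Pi.mul_apply, Pi.pow_apply]
    have hane : A t ≠ 0 := ne_of_gt ha
    have hcne : C t ≠ 0 := ne_of_gt hc
    field_simp
    ring
  -- conservation on Ici 0
  have hcons : ∀ t ∈ Set.Ici (0:ℝ), F t = c1 := by
    intro t ht
    have hsub : ∀ x ∈ Set.Icc (0:ℝ) t, x ∈ Set.Ici (0:ℝ) := fun x hx => hx.1
    have hcontF : ContinuousOn F (Set.Icc 0 t) := fun x hx =>
      ((hFderiv x (hsub x hx)).continuousWithinAt).mono (fun y hy => hy.1)
    have hder : ∀ x ∈ Set.Ico (0:ℝ) t, HasDerivWithinAt F 0 (Set.Ici x) x := fun x hx =>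
      (hFderiv x hx.1).mono (fun y hy => le_trans hx.1 hy)
    have := constant_of_has_deriv_right_zero hcontF hder t (Set.right_mem_Icc.2 ht)
    rw [this, hF]
    simp only [hA0, hC0]
    rw [hc1]
  have hcons' : ∀ t ∈ Set.Ici (0:ℝ), A t + C t = c1 * (A t * (C t) ^ 2) := by
    intro t ht
    have ha := hApos t ht
    have hc := hCpos t ht
    have := hcons t ht
    rw [hF] at this
    field_simp at this
    linarith [this]
  -- the explicit formula
  have hformula : ∀ t ∈ Set.Ici (0:ℝ),
      C t = (1 + Real.sqrt (1 + 4 * c1 * (A t) ^ 2)) / (2 * c1 * A t) := by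
    intro t ht
    have ha := hApos t ht
    have hc := hCpos t ht
    have hq := hcons' t ht
    have hsq : (2 * c1 * A t * C t - 1) ^ 2 = 1 + 4 * c1 * (A t) ^ 2 := by nlinarith
    have hpos : 0 < 2 * c1 * A t * C t - 1 := by
      by_contra h
      push_neg at h
      nlinarith [mul_pos (mul_pos (mul_pos two_pos hc1pos) ha) hc]
    rw [show 1 + 4 * c1 * (A t) ^ 2 = (2 * c1 * A t * C t - 1) ^ 2 from hsq.symm,
      Real.sqrt_sq hpos.le]
    have h2 : 2 * c1 * A t ≠ 0 := by positivity
    field_simp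
    ring
  -- A grows at least linearly
  have hAgrow : ∀ t ∈ Set.Ici (0:ℝ), l1 + 2 * t ≤ A t := by
    have hmono : StrictMonoOn (fun t => A t - 2 * t) (Set.Ici (0:ℝ)) := by
      apply strictMonoOn_of_hasDerivWithinAt_pos (convex_Ici 0)
        (f' := fun t => C t / A t)
      · intro x hx
        exact (hA x hx).continuousWithinAt.sub ((continuous_const.mul continuous_id).continuousWithinAt)
      · intro x hx
        rw [interior_Ici] at hx
        have hx' : x ∈ Set.Ici (0:ℝ) := Set.mem_Ici.2 (le_of_lt hx)
        have := (hA x hx').sub ((hasDerivWithinAt_id x (Set.Ici (0:ℝ))).const_mul 2)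
        rw [interior_Ici]
        refine (this.mono (fun y hy => Set.mem_Ici.2 (le_of_lt hy))).congr_deriv ?_
        simp
      · intro x hx
        rw [interior_Ici] at hx
        have hx' : x ∈ Set.Ici (0:ℝ) := Set.mem_Ici.2 (le_of_lt hx)
        exact div_pos (hCpos x hx') (hApos x hx')
    intro t ht
    rcases eq_or_lt_of_le (show (0:ℝ) ≤ t from ht) with h | h
    · simp [← h, hA0]
    · have := hmono (Set.self_mem_Ici) ht h
      simp only [hA0, mul_zero, sub_zero] at this
      linarith
  have hAtop : Tendsto A atTop atTop := by
    apply tendsto_atTop_mono' _ _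
      (tendsto_atTop_add_const_left atTop l1
        ((tendsto_id (α := ℝ)).const_mul_atTop two_pos))
    filter_upwards [eventually_ge_atTop (0:ℝ)] with t ht
    exact hAgrow t ht
  -- limit of C
  have hCtop : Tendsto C atTop (nhds (1 / Real.sqrt c1)) := by
    have hu : Tendsto (fun x : ℝ => (2 * c1 * x)⁻¹) atTop (nhds 0) := by
      apply Tendsto.inv_tendsto_atTop
      exact (tendsto_id (α := ℝ)).const_mul_atTop (by positivity)
    have hg : Tendsto (fun x : ℝ => (2 * c1 * x)⁻¹ + Real.sqrt (((2 * c1 * x)⁻¹) ^ 2 + 1 / c1))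
        atTop (nhds (1 / Real.sqrt c1)) := by
      have hsqrt : Tendsto (fun x : ℝ => Real.sqrt (((2 * c1 * x)⁻¹) ^ 2 + 1 / c1)) atTop
          (nhds (Real.sqrt ((0:ℝ) ^ 2 + 1 / c1))) :=
        ((hu.pow 2).add tendsto_const_nhds).sqrt
      have := hu.add hsqrt
      convert this using 2
      norm_num [Real.sqrt_inv]
    have hev : ∀ᶠ t in atTop, C t
        = (2 * c1 * A t)⁻¹ + Real.sqrt (((2 * c1 * A t)⁻¹) ^ 2 + 1 / c1) := by
      filter_upwards [eventually_ge_atTop (0:ℝ)] with t ht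
      rw [hformula t ht, stmt_19_aux c1 (A t) hc1pos (hApos t ht)]
    exact (hg.comp hAtop).congr' (hev.mono fun t h => h.symm)
  exact ⟨hc1pos, hcons, hformula, hAtop, hCtop⟩
end
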